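/- arXiv:0810.5203 — 3 statements merged into one kernel-verified Lean document; each statement's English description precedes it below -/
import Mathlib

section
/- For a pmf f on Z_+ with mean λ ∈ (0,∞), D(f) ≤ λ · D(S(f) | f). -/
open scoped BigOperators ENNReal Classical
open Filter

/-- `f` is a probability mass function on `ℕ`. -/
def IsPmf (f : ℕ → ℝ) : Prop := (∀ i, 0 ≤ f i) ∧ HasSum f 1

/-- The mean of a pmf on `ℕ`. -/
noncomputable def pmfMean (f : ℕ → ℝ) : ℝ := ∑' i : ℕ, (i : ℝ) * f i

/-- The Poisson pmf with parameter `lam`. -/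
noncomputable def po (lam : ℝ) (i : ℕ) : ℝ := lam ^ i * Real.exp (-lam) / (Nat.factorial i)

/-- The `α`-thinning of a pmf `f`. -/
noncomputable def thin (α : ℝ) (f : ℕ → ℝ) (i : ℕ) : ℝ :=
  ∑' j : ℕ, f j * (Nat.choose j i : ℝ) * α ^ i * (1 - α) ^ (j - i)

/-- Convolution of two pmfs on `ℕ`. -/
def conv (f g : ℕ → ℝ) (i : ℕ) : ℝ := ∑ j ∈ Finset.range (i + 1), f j * g (i - j)

/-- `n`-fold convolution power of a pmf; `convPow f 1 = f`. -/
def convPow (f : ℕ → ℝ) : ℕ → ℕ → ℝ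
  | 0 => fun i => if i = 0 then 1 else 0
  | n + 1 => conv (convPow f n) f

/-- Shannon entropy of a pmf on `ℕ`. -/
noncomputable def ent (f : ℕ → ℝ) : ℝ := -∑' i : ℕ, f i * Real.log (f i)

/-- Relative entropy `D(f | g)`, valued in `ℝ≥0∞`; it is `∞` if the support of `f`
is not contained in that of `g` or if the defining series does not converge. -/
noncomputable def KL (f g : ℕ → ℝ) : ℝ≥0∞ :=
  if (∀ i, g i = 0 → f i = 0) ∧ Summable (fun i : ℕ => f i * Real.log (f i / g i)) then
    ENNReal.ofReal (∑' i : ℕ, f i * Real.log (f i / g i))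
  else ⊤

/-- `D(f) = D(f | po(λ))` where `λ` is the mean of `f`. -/
noncomputable def KLpo (f : ℕ → ℝ) : ℝ≥0∞ := KL f (po (pmfMean f))

/-- The size-biased pmf `S(f)`. -/
noncomputable def sizeBias (f : ℕ → ℝ) (i : ℕ) : ℝ := (i + 1 : ℝ) * f (i + 1) / pmfMean f

namespace MLSAux

/-! ### Elementary facts -/

noncomputable def cl (s : ℝ) : ℝ := max 0 (min 1 s)

lemma cl_nonneg (s : ℝ) : 0 ≤ cl s := le_max_left _ _

lemma cl_le_one (s : ℝ) : cl s ≤ 1 := by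
  apply max_le (by norm_num) (min_le_left _ _)

lemma cl_eq {s : ℝ} (h0 : 0 ≤ s) (h1 : s ≤ 1) : cl s = s := by
  unfold cl; rw [min_eq_right h1, max_eq_right h0]

lemma continuous_cl : Continuous cl :=
  continuous_const.max (continuous_const.min continuous_id)

lemma cl_eventuallyEq {s : ℝ} (h : s ∈ Set.Ioo (0:ℝ) 1) :
    (fun t => cl t) =ᶠ[nhds s] fun t => t := by
  filter_upwards [Ioo_mem_nhds h.1 h.2] with t ht
  exact cl_eq ht.1.le ht.2.le

lemma tsum_pow_div_factorial (x : ℝ) :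
    ∑' n : ℕ, x ^ n / (Nat.factorial n) = Real.exp x := by
  rw [Real.exp_eq_exp_ℝ, NormedSpace.exp_eq_tsum_div]

lemma summable_pow_fact (x : ℝ) : Summable (fun n : ℕ => x ^ n / (Nat.factorial n)) :=
  Real.summable_pow_div_factorial x

lemma summable_nat_pow_fact (lam : ℝ) :
    Summable (fun m : ℕ => (m:ℝ) * lam ^ (m-1) / (Nat.factorial m)) := by
  rw [← summable_nat_add_iff 1]
  apply Summable.congr (summable_pow_fact lam)
  intro m
  show lam ^ m / (Nat.factorial m : ℝ) = _
  have h2 : (Nat.factorial m : ℝ) ≠ 0 := Nat.cast_ne_zero.mpr (Nat.factorial_ne_zero m)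
  rw [Nat.add_sub_cancel, Nat.factorial_succ]
  push_cast
  field_simp

lemma po_pos {lam : ℝ} (hl : 0 < lam) (x : ℕ) : 0 < po lam x := by
  unfold po
  positivity

lemma po_nonneg {lam : ℝ} (hl : 0 < lam) (x : ℕ) : 0 ≤ po lam x := (po_pos hl x).le

lemma po_succ (lam : ℝ) (x : ℕ) : ((x:ℝ)+1) * po lam (x+1) = lam * po lam x := by
  unfold po
  rw [Nat.factorial_succ, pow_succ]
  push_cast
  field_simp

lemma hasSum_po {lam : ℝ} (hl : 0 ≤ lam) : HasSum (po lam) 1 := by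
  have h1 : HasSum (fun n : ℕ => lam ^ n / (Nat.factorial n)) (Real.exp lam) := by
    have := (summable_pow_fact lam).hasSum
    rwa [tsum_pow_div_factorial lam] at this
  have h2 := h1.mul_right (Real.exp (-lam))
  have h3 : Real.exp lam * Real.exp (-lam) = 1 := by
    rw [← Real.exp_add]; simp
  rw [h3] at h2
  have h4 : po lam = fun x : ℕ => lam ^ x / (Nat.factorial x) * Real.exp (-lam) := by
    funext x
    unfold po
    ring
  rw [h4]
  exact h2

lemma summable_po {lam : ℝ} (hl : 0 < lam) : Summable (po lam) :=
  (hasSum_po hl.le).summable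

lemma tsum_po {lam : ℝ} (hl : 0 < lam) : ∑' x, po lam x = 1 := (hasSum_po hl.le).tsum_eq

lemma summable_nat_mul_po {lam : ℝ} (hl : 0 < lam) :
    Summable (fun x : ℕ => (x:ℝ) * po lam x) := by
  rw [← summable_nat_add_iff 1]
  have : ∀ x : ℕ, ((x+1:ℕ):ℝ) * po lam (x+1) = lam * po lam x := by
    intro x
    push_cast
    exact po_succ lam x
  apply Summable.congr ((summable_po hl).mul_left lam)
  intro x
  exact (this x).symm

/-- summability of `po`-weighted families with a bound `π x * C`. -/
lemma summable_po_bdd {lam : ℝ} (hl : 0 < lam) {k : ℕ → ℝ} {C : ℝ}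
    (hk : ∀ x, |k x| ≤ C) : Summable (fun x : ℕ => po lam x * k x) := by
  apply Summable.of_norm_bounded (g := fun x => po lam x * C) ((summable_po hl).mul_right C)
  intro x
  rw [Real.norm_eq_abs, abs_mul, abs_of_nonneg (po_nonneg hl x)]
  exact mul_le_mul_of_nonneg_left (hk x) (po_nonneg hl x)

lemma summable_po_mul_bdd {lam : ℝ} (hl : 0 < lam) {k : ℕ → ℝ} {C : ℝ}
    (hk : ∀ x, |k x| ≤ C) : Summable (fun x : ℕ => po lam x * ((x:ℝ) * k x)) := by
  apply Summable.of_norm_bounded (g := fun x : ℕ => ((x:ℝ) * po lam x) * C)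
    ((summable_nat_mul_po hl).mul_right C)
  intro x
  rw [Real.norm_eq_abs]
  have h0 : 0 ≤ (x:ℝ) * po lam x := mul_nonneg (Nat.cast_nonneg x) (po_nonneg hl x)
  calc |po lam x * ((x:ℝ) * k x)| = ((x:ℝ) * po lam x) * |k x| := by
        rw [abs_mul, abs_mul, abs_of_nonneg (po_nonneg hl x), abs_of_nonneg (Nat.cast_nonneg x)]
        ring
    _ ≤ ((x:ℝ) * po lam x) * C := mul_le_mul_of_nonneg_left (hk x) h0

/-! ### The two-variable entropy function -/

noncomputable def Phi (a b : ℝ) : ℝ := a * (Real.log a - Real.log b) - a + b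

noncomputable def Psi (u : ℝ) : ℝ := u * Real.log u

lemma Phi_nonneg {a b : ℝ} (ha : 0 < a) (hb : 0 < b) : 0 ≤ Phi a b := by
  unfold Phi
  have h := Real.log_le_sub_one_of_pos (show 0 < b / a by positivity)
  rw [Real.log_div hb.ne' ha.ne'] at h
  have h2 := mul_le_mul_of_nonneg_left h ha.le
  have h3 : a * (b / a - 1) = b - a := by field_simp
  nlinarith [ha.le, hb.le]

/-- The supporting-line inequality for `Phi`. -/
lemma Phi_ge_line {p q c : ℝ} (hp : 0 < p) (hq : 0 < q) (hc : 0 < c) :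
    p * Real.log c + (1 - c) * q ≤ Phi p q := by
  unfold Phi
  have h := Real.log_le_sub_one_of_pos (show 0 < q * c / p by positivity)
  rw [Real.log_div (by positivity) hp.ne', Real.log_mul hq.ne' hc.ne'] at h
  have := mul_le_mul_of_nonneg_left h hp.le
  have hqc : p * (q * c / p) = q * c := by field_simp
  nlinarith [hp.le, hq.le]

lemma abs_log_le {u al be : ℝ} (hu : u ∈ Set.Icc al be) (hal : 0 < al) :
    |Real.log u| ≤ |Real.log al| + |Real.log be| := by
  have hu0 : 0 < u := lt_of_lt_of_le hal hu.1
  rw [abs_le]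
  constructor
  · have := Real.log_le_log hal hu.1
    have h2 : -|Real.log al| ≤ Real.log al := neg_abs_le _
    linarith [abs_nonneg (Real.log be)]
  · have := Real.log_le_log hu0 hu.2
    have h2 : Real.log be ≤ |Real.log be| := le_abs_self _
    linarith [abs_nonneg (Real.log al)]

lemma Psi_abs_le {u al be : ℝ} (hu : u ∈ Set.Icc al be) (hal : 0 < al) :
    |Psi u| ≤ be * (|Real.log al| + |Real.log be|) := by
  have hu0 : 0 < u := lt_of_lt_of_le hal hu.1
  have hbe : 0 < be := lt_of_lt_of_le hu0 hu.2
  have hlog : |Real.log u| ≤ |Real.log al| + |Real.log be| := by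
    rw [abs_le]
    constructor
    · have := Real.log_le_log hal hu.1
      have h2 : -|Real.log al| ≤ Real.log al := neg_abs_le _
      linarith [abs_nonneg (Real.log be)]
    · have := Real.log_le_log hu0 hu.2
      have h2 : Real.log be ≤ |Real.log be| := le_abs_self _
      linarith [abs_nonneg (Real.log al)]
  have : |Psi u| = u * |Real.log u| := by
    unfold Psi; rw [abs_mul, abs_of_pos hu0]
  rw [this]
  calc u * |Real.log u| ≤ be * |Real.log u| :=
        mul_le_mul_of_nonneg_right hu.2 (abs_nonneg _)
    _ ≤ be * (|Real.log al| + |Real.log be|) := by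
        apply mul_le_mul_of_nonneg_left _ hbe.le
        linarith [abs_nonneg (Real.log al), abs_nonneg (Real.log be)]

lemma Phi_le_bound {p q al be : ℝ} (hp : p ∈ Set.Icc al be) (hq : q ∈ Set.Icc al be)
    (hal : 0 < al) : Phi p q ≤ be * (|Real.log al| + |Real.log be|) + be := by
  have hp0 : 0 < p := lt_of_lt_of_le hal hp.1
  have hq0 : 0 < q := lt_of_lt_of_le hal hq.1
  have hbe : 0 < be := lt_of_lt_of_le hp0 hp.2
  have h1 : |Real.log p - Real.log q| ≤ |Real.log al| + |Real.log be| := by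
    have hpl : Real.log al ≤ Real.log p := Real.log_le_log hal hp.1
    have hpu : Real.log p ≤ Real.log be := Real.log_le_log hp0 hp.2
    have hql : Real.log al ≤ Real.log q := Real.log_le_log hal hq.1
    have hqu : Real.log q ≤ Real.log be := Real.log_le_log hq0 hq.2
    have h2 : -|Real.log al| ≤ Real.log al := neg_abs_le _
    have h3 : Real.log be ≤ |Real.log be| := le_abs_self _
    rw [abs_le]; constructor <;> linarith
  unfold Phi
  have : p * (Real.log p - Real.log q) ≤ be * (|Real.log al| + |Real.log be|) := by
    calc p * (Real.log p - Real.log q) ≤ p * |Real.log p - Real.log q| :=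
          mul_le_mul_of_nonneg_left (le_abs_self _) hp0.le
      _ ≤ be * (|Real.log al| + |Real.log be|) := by
          apply mul_le_mul hp.2 h1 (abs_nonneg _) hbe.le
  linarith [hp0.le, hq.2]

/-- `Phi` with the special value `Phi 0 b = b` under Lean's `log 0 = 0` convention. -/
lemma Phi_zero_left (b : ℝ) : Phi 0 b = b := by unfold Phi; simp

lemma Phi_nonneg' {a b : ℝ} (ha : 0 ≤ a) (hb : 0 ≤ b) (hba : b = 0 → a = 0) :
    0 ≤ Phi a b := by
  rcases eq_or_lt_of_le hb with hb0 | hb0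
  · have ha0 : a = 0 := hba hb0.symm
    rw [ha0, ← hb0, Phi_zero_left]
  rcases eq_or_lt_of_le ha with ha0 | ha0
  · rw [← ha0, Phi_zero_left]; linarith
  exact Phi_nonneg ha0 hb0

/-- The Bregman "cocycle" identity for `Phi`. -/
lemma Phi_first_identity (a q b : ℝ) :
    Phi a b - Phi q b = Phi a q + (a - q) * (Real.log q - Real.log b) := by
  unfold Phi; ring

/-- The second-argument difference identity. -/
lemma Phi_second_identity (a t s : ℝ) :
    Phi a t - Phi a s = a * (Real.log s - Real.log t) + t - s := by
  unfold Phi; ring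

/-- moving the second argument from `s` toward `a` (with `t` between) decreases `Phi`. -/
lemma Phi_second_mono_up {a t s : ℝ} (ha : 0 ≤ a) (hs : 0 < s) (hst : s ≤ t) (hta : t ≤ a) :
    Phi a t ≤ Phi a s := by
  have ht : 0 < t := lt_of_lt_of_le hs hst
  have h1 : Real.log s - Real.log t ≤ 0 := by
    have := Real.log_le_log hs hst; linarith
  have h2 : a * (Real.log s - Real.log t) ≤ t * (Real.log s - Real.log t) := by
    apply mul_le_mul_of_nonpos_right (by linarith) h1
  have h3 : t * (Real.log t - Real.log s) ≥ t - s := by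
    have := Phi_nonneg ht hs
    unfold Phi at this; nlinarith
  have := Phi_second_identity a t s
  nlinarith
  
lemma Phi_second_mono_down {a t s : ℝ} (ha : 0 ≤ a) (hat : a ≤ t) (hts : t ≤ s) (ht : 0 < t) :
    Phi a t ≤ Phi a s := by
  have hs : 0 < s := lt_of_lt_of_le ht hts
  have h1 : 0 ≤ Real.log s - Real.log t := by
    have := Real.log_le_log ht hts; linarith
  have h2 : a * (Real.log s - Real.log t) ≤ t * (Real.log s - Real.log t) :=
    mul_le_mul_of_nonneg_right (by linarith) h1
  have h3 : t * (Real.log s - Real.log t) ≤ s - t := by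
    have hlog := Real.log_le_sub_one_of_pos (show 0 < s / t by positivity)
    rw [Real.log_div hs.ne' ht.ne'] at hlog
    have h4 := mul_le_mul_of_nonneg_left hlog ht.le
    have h5 : t * (s / t - 1) = s - t := by field_simp
    nlinarith
  have := Phi_second_identity a t s
  nlinarith

/-- clipping from above decreases `Phi`. -/
lemma Phi_clip_up {a b be : ℝ} (ha : 0 ≤ a) (hb : 0 ≤ b) (hba : b = 0 → a = 0)
    (hbe : 0 < be) : Phi (min be a) (min be b) ≤ Phi a b := by
  rcases le_or_gt a be with hab | hab <;> rcases le_or_gt b be with hbb | hbb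
  · rw [min_eq_right hab, min_eq_right hbb]
  · -- a ≤ be < b
    rw [min_eq_right hab, min_eq_left hbb.le]
    exact Phi_second_mono_down (by linarith) hab hbb.le hbe
  · -- b ≤ be < a
    rw [min_eq_left hab.le, min_eq_right hbb]
    have hb0 : 0 < b := by
      rcases eq_or_lt_of_le hb with h | h
      · exact absurd (hba h.symm) (by intro hh; rw [hh] at hab; linarith)
      · exact h
    have hid := Phi_first_identity a be b
    have h1 : 0 ≤ Phi a be := Phi_nonneg (by linarith) hbe
    have h2 : 0 ≤ (a - be) * (Real.log be - Real.log b) := by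
      apply mul_nonneg (by linarith)
      have := Real.log_le_log hb0 hbb; linarith
    linarith
  · -- both above
    rw [min_eq_left hab.le, min_eq_left hbb.le]
    have hb0 : 0 < b := lt_trans hbe hbb
    have ha0 : 0 < a := lt_trans hbe hab
    have : Phi be be = 0 := by unfold Phi; ring
    rw [this]
    exact Phi_nonneg ha0 hb0

/-- clipping from below decreases `Phi`. -/
lemma Phi_clip_lo {a b al : ℝ} (ha : 0 ≤ a) (hb : 0 ≤ b) (hba : b = 0 → a = 0)
    (hal : 0 < al) : Phi (max al a) (max al b) ≤ Phi a b := by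
  rcases le_or_gt al a with hab | hab <;> rcases le_or_gt al b with hbb | hbb
  · rw [max_eq_right hab, max_eq_right hbb]
  · -- b < al ≤ a
    rw [max_eq_right hab, max_eq_left hbb.le]
    have hb0 : 0 < b := by
      rcases eq_or_lt_of_le hb with h | h
      · exact absurd (hba h.symm) (by intro hh; rw [hh] at hab; linarith)
      · exact h
    exact Phi_second_mono_up ha hb0 hbb.le hab
  · -- a < al ≤ b
    rw [max_eq_left hab.le, max_eq_right hbb]
    have hid := Phi_first_identity a al b
    have h1 : 0 ≤ Phi a al := Phi_nonneg' ha hal.le (fun h => by linarith)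
    have h2 : 0 ≤ (a - al) * (Real.log al - Real.log b) := by
      rw [show (a - al) * (Real.log al - Real.log b)
          = (al - a) * (Real.log b - Real.log al) by ring]
      apply mul_nonneg (by linarith)
      have := Real.log_le_log hal hbb; linarith
    linarith
  · -- both below
    rw [max_eq_left hab.le, max_eq_left hbb.le]
    have : Phi al al = 0 := by unfold Phi; ring
    rw [this]
    exact Phi_nonneg' ha hb hba

/-- Clipping both arguments decreases `Phi` (needs `b = 0 → a = 0`). -/
lemma Phi_clip {a b al be : ℝ} (ha : 0 ≤ a) (hb : 0 ≤ b) (hba : b = 0 → a = 0)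
    (hal : 0 < al) (halbe : al ≤ be) :
    Phi (max al (min be a)) (max al (min be b)) ≤ Phi a b := by
  have hbe : 0 < be := lt_of_lt_of_le hal halbe
  have h1 : Phi (min be a) (min be b) ≤ Phi a b := Phi_clip_up ha hb hba hbe
  have h2 : Phi (max al (min be a)) (max al (min be b)) ≤ Phi (min be a) (min be b) := by
    apply Phi_clip_lo (le_min hbe.le ha) (le_min hbe.le hb) _ hal
    intro h
    have hb0 : b = 0 := by
      rcases le_or_gt be b with hh | hh
      · rw [min_eq_left hh] at h; linarith
      · rwa [min_eq_right hh.le] at h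
    rw [hba hb0]
    exact min_eq_right hbe.le
  exact h2.trans h1

/-- Derivative of the Poisson weight in its parameter. -/
lemma po_hasDerivAt (x : ℕ) (r : ℝ) :
    HasDerivAt (fun t => po t x) ((if x = 0 then 0 else po r (x-1)) - po r x) r := by
  have hexp : HasDerivAt (fun t : ℝ => Real.exp (-t)) (Real.exp (-r) * (-1)) r := by
    simpa using ((hasDerivAt_id r).neg.exp)
  have h1 : HasDerivAt (fun t : ℝ => t ^ x * Real.exp (-t) / (Nat.factorial x))
      (((x:ℝ) * r ^ (x-1) * Real.exp (-r) + r ^ x * (Real.exp (-r) * (-1)))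
        / (Nat.factorial x)) r :=
    ((hasDerivAt_pow x r).mul hexp).div_const _
  have h2 : (fun t : ℝ => po t x) = fun t : ℝ => t ^ x * Real.exp (-t) / (Nat.factorial x) := by
    funext t; rfl
  rw [h2]
  convert h1 using 1
  rcases Nat.eq_zero_or_pos x with hx | hx
  · subst hx
    simp [po]
  · rw [if_neg (Nat.pos_iff_ne_zero.mp hx)]
    unfold po
    rcases Nat.exists_eq_succ_of_ne_zero (Nat.pos_iff_ne_zero.mp hx) with ⟨k, rfl⟩
    rw [Nat.succ_sub_one, Nat.factorial_succ]
    have h2 : (Nat.factorial k : ℝ) ≠ 0 := Nat.cast_ne_zero.mpr (Nat.factorial_ne_zero k)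
    have h3 : ((k:ℝ)+1) ≠ 0 := by positivity
    push_cast
    field_simp
    ring

lemma po_le_of_mem {r lam : ℝ} (hr0 : 0 ≤ r) (hrl : r ≤ lam) (x : ℕ) :
    |po r x| ≤ lam ^ x / (Nat.factorial x) := by
  unfold po
  have hex : Real.exp (-r) ≤ 1 := by rw [Real.exp_le_one_iff]; linarith
  have hex0 : 0 ≤ Real.exp (-r) := (Real.exp_pos _).le
  rw [abs_of_nonneg (by positivity)]
  calc r ^ x * Real.exp (-r) / (Nat.factorial x)
      ≤ r ^ x * 1 / (Nat.factorial x) := by gcongr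
    _ ≤ lam ^ x / (Nat.factorial x) := by
        rw [mul_one]; gcongr
        all_goals first | exact hr0 | exact hrl


/-! ### The heat flow interpolation -/

/-- clamp of `t` into `[0, lam]`. -/
noncomputable def cI (lam t : ℝ) : ℝ := max 0 (min lam t)

lemma cI_nonneg (lam t : ℝ) : 0 ≤ cI lam t := le_max_left _ _

lemma cI_le (lam t : ℝ) (hl : 0 ≤ lam) : cI lam t ≤ lam :=
  max_le hl (min_le_left _ _)

lemma cI_eq {lam t : ℝ} (h0 : 0 ≤ t) (h1 : t ≤ lam) : cI lam t = t := by
  unfold cI; rw [min_eq_right h1, max_eq_right h0]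

lemma continuous_cI (lam : ℝ) : Continuous (cI lam) :=
  continuous_const.max (continuous_const.min continuous_id)

section hderiv

/-- Differentiation of a series term by term, on an open set. -/
lemma hasDerivAt_tsum_on {I : Set ℝ} (hI : IsOpen I) {F F' : ℕ → ℝ → ℝ} {u : ℕ → ℝ}
    (hu : Summable u) (hF : ∀ n, ∀ s ∈ I, HasDerivAt (F n) (F' n s) s)
    (hb : ∀ n, ∀ s ∈ I, |F' n s| ≤ u n) (hs0 : ∀ s ∈ I, Summable (fun n => F n s))
    {s₀ : ℝ} (h₀ : s₀ ∈ I) :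
    HasDerivAt (fun s => ∑' n, F n s) (∑' n, F' n s₀) s₀ := by
  refine hasDerivAt_of_tendstoUniformlyOn (f := fun (T : Finset ℕ) (s : ℝ) => ∑ n ∈ T, F n s)
    hI (tendstoUniformlyOn_tsum hu (fun n s hs => by simpa using hb n s hs))
    ?_ ?_ h₀
  · apply Filter.Eventually.of_forall
    intro t s hs
    exact HasDerivAt.fun_sum (fun n _ => hF n s hs)
  · intro s hs
    exact (hs0 s hs).hasSum

end hderiv

/-- `mlsU lam g τ x = E[g (x + Po(τ))]`, with `τ` clamped into `[0, lam]`. -/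
noncomputable def mlsU (lam : ℝ) (g : ℕ → ℝ) (τ : ℝ) (x : ℕ) : ℝ :=
  ∑' m : ℕ, g (x+m) * ((cI lam τ) ^ m / (Nat.factorial m) * Real.exp (-(cI lam τ)))

/-- The interpolation functional. -/
noncomputable def mlsV (lam : ℝ) (g : ℕ → ℝ) (r : ℝ) : ℝ :=
  ∑' x : ℕ, po (cI lam r) x * Psi (mlsU lam g (lam - cI lam r) x)

section flow

variable {lam : ℝ} {g : ℕ → ℝ} {al be C : ℝ}

lemma weight_nonneg (hl : 0 < lam) (τ : ℝ) (m : ℕ) :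
    0 ≤ (cI lam τ) ^ m / (Nat.factorial m) * Real.exp (-(cI lam τ)) := by
  have := cI_nonneg lam τ
  positivity

lemma weight_le (hl : 0 < lam) (τ : ℝ) (m : ℕ) :
    (cI lam τ) ^ m / (Nat.factorial m) * Real.exp (-(cI lam τ))
      ≤ lam ^ m / (Nat.factorial m) := by
  have h0 := cI_nonneg lam τ
  have h1 := cI_le lam τ hl.le
  have hexp : Real.exp (-(cI lam τ)) ≤ 1 := by
    rw [Real.exp_le_one_iff]; linarith
  calc (cI lam τ) ^ m / (Nat.factorial m) * Real.exp (-(cI lam τ))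
      ≤ (cI lam τ) ^ m / (Nat.factorial m) * 1 := by
        apply mul_le_mul_of_nonneg_left hexp
        positivity
    _ ≤ lam ^ m / (Nat.factorial m) := by
        rw [mul_one]
        apply div_le_div_of_nonneg_right _ _
        · exact pow_le_pow_left₀ h0 h1 m
        · positivity

lemma summable_U_term (hl : 0 < lam) (hg : ∀ y, |g y| ≤ C) (τ : ℝ) (x : ℕ) :
    Summable (fun m : ℕ => g (x+m) * ((cI lam τ) ^ m / (Nat.factorial m)
      * Real.exp (-(cI lam τ)))) := by
  apply Summable.of_norm_bounded (g := fun m : ℕ => C * (lam ^ m / (Nat.factorial m)))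
    ((summable_pow_fact lam).mul_left C)
  intro m
  rw [Real.norm_eq_abs, abs_mul, abs_of_nonneg (weight_nonneg hl τ m)]
  exact mul_le_mul (hg _) (weight_le hl τ m) (weight_nonneg hl τ m)
    ((abs_nonneg _).trans (hg 0))

lemma hasSum_po_weights (hl : 0 < lam) (τ : ℝ) :
    HasSum (fun m : ℕ => (cI lam τ) ^ m / (Nat.factorial m) * Real.exp (-(cI lam τ))) 1 := by
  have h1 : HasSum (fun n : ℕ => (cI lam τ) ^ n / (Nat.factorial n))
      (Real.exp (cI lam τ)) := by
    have := (summable_pow_fact (cI lam τ)).hasSum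
    rwa [tsum_pow_div_factorial] at this
  have h2 := h1.mul_right (Real.exp (-(cI lam τ)))
  rwa [← Real.exp_add, add_neg_cancel, Real.exp_zero] at h2

lemma mlsU_le (hl : 0 < lam) (hgb : ∀ y, g y ≤ be) (hg0 : ∀ y, 0 ≤ g y) (τ : ℝ) (x : ℕ) :
    mlsU lam g τ x ≤ be := by
  have hC : ∀ y, |g y| ≤ be := fun y => abs_le.mpr ⟨by linarith [hg0 y, hgb y], hgb y⟩
  have h2 : HasSum (fun m : ℕ => be * ((cI lam τ) ^ m / (Nat.factorial m)
      * Real.exp (-(cI lam τ)))) be := by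
    simpa using (hasSum_po_weights hl τ).mul_left be
  rw [show be = ∑' m : ℕ, be * ((cI lam τ) ^ m / (Nat.factorial m)
      * Real.exp (-(cI lam τ))) from h2.tsum_eq.symm]
  apply Summable.tsum_le_tsum _ (summable_U_term hl hC τ x) h2.summable
  intro m
  exact mul_le_mul_of_nonneg_right (hgb _) (weight_nonneg hl τ m)

lemma le_mlsU (hl : 0 < lam) (hga : ∀ y, al ≤ g y) (hal : 0 ≤ al)
    (hg : ∀ y, |g y| ≤ C) (τ : ℝ) (x : ℕ) :
    al ≤ mlsU lam g τ x := by
  have h2 : HasSum (fun m : ℕ => al * ((cI lam τ) ^ m / (Nat.factorial m)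
      * Real.exp (-(cI lam τ)))) al := by
    simpa using (hasSum_po_weights hl τ).mul_left al
  rw [show al = ∑' m : ℕ, al * ((cI lam τ) ^ m / (Nat.factorial m)
      * Real.exp (-(cI lam τ))) from h2.tsum_eq.symm]
  apply Summable.tsum_le_tsum _ h2.summable (summable_U_term hl hg τ x)
  intro m
  exact mul_le_mul_of_nonneg_right (hga _) (weight_nonneg hl τ m)

lemma mlsU_succ (lam : ℝ) (τ : ℝ) (x : ℕ) :
    mlsU lam (fun y => g (y+1)) τ x = mlsU lam g τ (x+1) := by
  unfold mlsU
  apply tsum_congr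
  intro m
  show g (x + m + 1) * _ = g (x + 1 + m) * _
  rw [show x + m + 1 = x + 1 + m by omega]

/-- `mlsU` at `τ = 0` is the identity. -/
lemma mlsU_zero (hl : 0 < lam) (x : ℕ) : mlsU lam g 0 x = g x := by
  unfold mlsU
  have h0 : cI lam 0 = 0 := cI_eq le_rfl hl.le
  rw [h0]
  rw [tsum_eq_single 0]
  · simp
  · intro m hm
    rcases Nat.exists_eq_succ_of_ne_zero hm with ⟨n, rfl⟩
    simp [zero_pow]

/-- `mlsU` at `τ = lam`, evaluated at `0`, is the Poisson mean. -/
lemma mlsU_lam (hl : 0 < lam) (hg : ∀ y, |g y| ≤ C) :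
    mlsU lam g lam 0 = ∑' y : ℕ, po lam y * g y := by
  unfold mlsU
  have h0 : cI lam lam = lam := cI_eq hl.le le_rfl
  rw [h0]
  apply tsum_congr
  intro m
  show g (0 + m) * (lam ^ m / ↑(Nat.factorial m) * Real.exp (-lam)) = po lam m * g m
  rw [Nat.zero_add]
  unfold po
  ring

/-- Jensen-type inequality: `Phi (U g' x, U g x) ≤ U (Phi(g', g)) x`. -/
lemma mlsU_jensen (hl : 0 < lam) (hga : ∀ y, al ≤ g y) (hgb : ∀ y, g y ≤ be)
    (hal : 0 < al) (τ : ℝ) (x : ℕ) :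
    Phi (mlsU lam g τ (x+1)) (mlsU lam g τ x)
      ≤ mlsU lam (fun y => Phi (g (y+1)) (g y)) τ x := by
  have hbe : 0 < be := lt_of_lt_of_le hal ((hga 0).trans (hgb 0))
  have hC : ∀ y, |g y| ≤ be := fun y =>
    abs_le.mpr ⟨by linarith [hga y, hal.le], hgb y⟩
  set a := mlsU lam g τ (x+1) with hadef
  set b := mlsU lam g τ x with hbdef
  have ha : al ≤ a := by
    rw [hadef, ← mlsU_succ]
    exact le_mlsU hl (fun y => hga _) hal.le (fun y => hC _) τ x
  have hb : al ≤ b := le_mlsU hl hga hal.le hC τ x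
  have ha0 : 0 < a := lt_of_lt_of_le hal ha
  have hb0 : 0 < b := lt_of_lt_of_le hal hb
  set c := a / b with hcdef
  have hc0 : 0 < c := div_pos ha0 hb0
  -- pointwise supporting-line inequality
  have hpt : ∀ y, Real.log c * g (y+1) + (1 - c) * g y ≤ Phi (g (y+1)) (g y) := by
    intro y
    have h := Phi_ge_line (lt_of_lt_of_le hal (hga (y+1))) (lt_of_lt_of_le hal (hga y)) hc0
    nlinarith [h]
  -- linearity of mlsU
  have hw : ∀ y, |Real.log c * g (y+1) + (1 - c) * g y| ≤ |Real.log c| * be + (1 + c) * be := by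
    intro y
    calc |Real.log c * g (y+1) + (1 - c) * g y|
        ≤ |Real.log c * g (y+1)| + |(1 - c) * g y| := abs_add_le _ _
      _ ≤ |Real.log c| * be + (1 + c) * be := by
          rw [abs_mul, abs_mul]
          apply add_le_add
          · exact mul_le_mul_of_nonneg_left (hC _) (abs_nonneg _)
          · apply mul_le_mul _ (hC _) (abs_nonneg _) (by positivity)
            rw [abs_le]; constructor <;> nlinarith [abs_nonneg (1 - c)]
  have hWsum := fun j => summable_U_term (C := be) hl hC τ j
  have hlin : mlsU lam (fun y => Real.log c * g (y+1) + (1 - c) * g y) τ x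
      = Real.log c * a + (1 - c) * b := by
    unfold mlsU
    have hsplit : ∀ m : ℕ,
        (Real.log c * g (x+m+1) + (1 - c) * g (x+m))
          * ((cI lam τ) ^ m / (Nat.factorial m) * Real.exp (-(cI lam τ)))
        = Real.log c * (g ((x+1)+m) * ((cI lam τ) ^ m / (Nat.factorial m)
            * Real.exp (-(cI lam τ))))
          + (1 - c) * (g (x+m) * ((cI lam τ) ^ m / (Nat.factorial m)
            * Real.exp (-(cI lam τ)))) := by
      intro m
      rw [show x + m + 1 = (x+1) + m by omega]
      ring
    rw [tsum_congr hsplit, Summable.tsum_add ((hWsum (x+1)).mul_left _) ((hWsum x).mul_left _),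
      tsum_mul_left, tsum_mul_left]
    rfl
  have hF : ∀ y, |Phi (g (y+1)) (g y)| ≤ be * (|Real.log al| + |Real.log be|) + be := by
    intro y
    rw [abs_of_nonneg (Phi_nonneg (lt_of_lt_of_le hal (hga _)) (lt_of_lt_of_le hal (hga _)))]
    exact Phi_le_bound ⟨hga _, hgb _⟩ ⟨hga _, hgb _⟩ hal
  have hmono : mlsU lam (fun y => Real.log c * g (y+1) + (1 - c) * g y) τ x
      ≤ mlsU lam (fun y => Phi (g (y+1)) (g y)) τ x := by
    unfold mlsU
    apply Summable.tsum_le_tsum _ (summable_U_term hl hw τ x) (summable_U_term hl hF τ x)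
    intro m
    exact mul_le_mul_of_nonneg_right (hpt _) (weight_nonneg hl τ m)
  have hPhi : Phi a b = Real.log c * a + (1 - c) * b := by
    unfold Phi
    rw [hcdef, Real.log_div ha0.ne' hb0.ne']
    field_simp
    ring
  rw [hPhi, ← hlin]
  exact hmono

/-- Continuity of `mlsU` in `τ`. -/
lemma mlsU_continuous (hl : 0 < lam) (hg : ∀ y, |g y| ≤ C) (x : ℕ) :
    Continuous (fun τ => mlsU lam g τ x) := by
  unfold mlsU
  apply continuous_tsum _ ((summable_pow_fact lam).mul_left C)
  · intro m τ
    rw [Real.norm_eq_abs, abs_mul, abs_of_nonneg (weight_nonneg hl τ m)]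
    exact mul_le_mul (hg _) (weight_le hl τ m) (weight_nonneg hl τ m)
      ((abs_nonneg _).trans (hg 0))
  · intro m
    apply Continuous.mul continuous_const
    apply Continuous.mul
    · exact ((continuous_cI lam).pow m).div_const _
    · exact (continuous_cI lam).neg.rexp

/-- Derivative of `mlsU` in `τ`: the pure-birth equation. -/
lemma mlsU_hasDerivAt (hl : 0 < lam) (hg : ∀ y, |g y| ≤ C) {τ : ℝ}
    (hτ : τ ∈ Set.Ioo (0:ℝ) lam) (x : ℕ) :
    HasDerivAt (fun t => mlsU lam g t x) (mlsU lam g τ (x+1) - mlsU lam g τ x) τ := by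
  have hC0 : 0 ≤ C := (abs_nonneg _).trans (hg 0)
  have hI : IsOpen (Set.Ioo (0:ℝ) lam) := isOpen_Ioo
  set F : ℕ → ℝ → ℝ :=
    fun m t => g (x+m) * (t ^ m / (Nat.factorial m) * Real.exp (-t)) with hFdef
  set F' : ℕ → ℝ → ℝ := fun m t => g (x+m) *
    ((m : ℝ) * t ^ (m-1) / (Nat.factorial m) * Real.exp (-t)
      + t ^ m / (Nat.factorial m) * (Real.exp (-t) * (-1))) with hF'def
  have hexp : ∀ t : ℝ, HasDerivAt (fun t : ℝ => Real.exp (-t)) (Real.exp (-t) * (-1)) t := by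
    intro t
    simpa using ((hasDerivAt_id t).neg.exp)
  have hderiv : ∀ m, ∀ t ∈ Set.Ioo (0:ℝ) lam, HasDerivAt (F m) (F' m t) t := by
    intro m t _
    apply HasDerivAt.const_mul
    exact ((hasDerivAt_pow m t).div_const _).mul (hexp t)
  have hbound : ∀ m, ∀ t ∈ Set.Ioo (0:ℝ) lam,
      |F' m t| ≤ C * ((m:ℝ) * lam ^ (m-1) / (Nat.factorial m) + lam ^ m / (Nat.factorial m)) := by
    intro m t ht
    have ht0 : 0 ≤ t := ht.1.le
    have htl : t ≤ lam := ht.2.le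
    have hex : Real.exp (-t) ≤ 1 := by rw [Real.exp_le_one_iff]; linarith
    have hex0 : 0 ≤ Real.exp (-t) := (Real.exp_pos _).le
    have hm0 : (0:ℝ) ≤ (m : ℝ) * t ^ (m-1) / (Nat.factorial m) :=
      div_nonneg (mul_nonneg (Nat.cast_nonneg m) (pow_nonneg ht0 _)) (Nat.cast_nonneg _)
    have hA : |(m : ℝ) * t ^ (m-1) / (Nat.factorial m) * Real.exp (-t)|
        ≤ (m:ℝ) * lam ^ (m-1) / (Nat.factorial m) := by
      rw [abs_mul, abs_of_nonneg hex0, abs_of_nonneg hm0]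
      calc (m : ℝ) * t ^ (m-1) / (Nat.factorial m) * Real.exp (-t)
          ≤ (m : ℝ) * t ^ (m-1) / (Nat.factorial m) * 1 :=
            mul_le_mul_of_nonneg_left hex hm0
        _ ≤ (m:ℝ) * lam ^ (m-1) / (Nat.factorial m) := by
            rw [mul_one]
            gcongr
            all_goals first | exact ht0 | exact htl
    have ht0' : (0:ℝ) ≤ t ^ m / (Nat.factorial m) :=
      div_nonneg (pow_nonneg ht0 _) (Nat.cast_nonneg _)
    have hB : |t ^ m / (Nat.factorial m) * (Real.exp (-t) * (-1))|
        ≤ lam ^ m / (Nat.factorial m) := by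
      rw [abs_mul, abs_of_nonneg ht0']
      have : |Real.exp (-t) * (-1)| = Real.exp (-t) := by
        rw [abs_mul]; simp [abs_of_nonneg hex0]
      rw [this]
      calc t ^ m / (Nat.factorial m) * Real.exp (-t)
          ≤ t ^ m / (Nat.factorial m) * 1 :=
            mul_le_mul_of_nonneg_left hex ht0'
        _ ≤ lam ^ m / (Nat.factorial m) := by
            rw [mul_one]
            gcongr
            all_goals first | exact ht0 | exact htl
    calc |F' m t| ≤ C * |(m : ℝ) * t ^ (m-1) / (Nat.factorial m) * Real.exp (-t)
          + t ^ m / (Nat.factorial m) * (Real.exp (-t) * (-1))| := by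
          rw [hF'def, abs_mul]
          exact mul_le_mul_of_nonneg_right (hg _) (abs_nonneg _)
      _ ≤ C * ((m:ℝ) * lam ^ (m-1) / (Nat.factorial m) + lam ^ m / (Nat.factorial m)) := by
          apply mul_le_mul_of_nonneg_left _ hC0
          exact (abs_add_le _ _).trans (add_le_add hA hB)
  have husum : Summable (fun m : ℕ =>
      C * ((m:ℝ) * lam ^ (m-1) / (Nat.factorial m) + lam ^ m / (Nat.factorial m))) :=
    (((summable_nat_pow_fact lam).add (summable_pow_fact lam)).mul_left C)
  have hs0 : ∀ t ∈ Set.Ioo (0:ℝ) lam, Summable (fun m => F m t) := by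
    intro t ht
    apply Summable.of_norm_bounded (g := fun m : ℕ => C * (lam ^ m / (Nat.factorial m)))
      ((summable_pow_fact lam).mul_left C)
    intro m
    rw [hFdef, Real.norm_eq_abs, abs_mul]
    have ht0 : 0 ≤ t := ht.1.le
    have hex : Real.exp (-t) ≤ 1 := by rw [Real.exp_le_one_iff]; linarith [ht.1]
    have ht0x : (0:ℝ) ≤ t ^ m / (Nat.factorial m) :=
      div_nonneg (pow_nonneg ht0 _) (Nat.cast_nonneg _)
    have h1 : |t ^ m / (Nat.factorial m) * Real.exp (-t)| ≤ lam ^ m / (Nat.factorial m) := by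
      rw [abs_of_nonneg (mul_nonneg ht0x (Real.exp_pos _).le)]
      calc t ^ m / (Nat.factorial m) * Real.exp (-t)
          ≤ t ^ m / (Nat.factorial m) * 1 :=
            mul_le_mul_of_nonneg_left hex ht0x
        _ ≤ lam ^ m / (Nat.factorial m) := by
            rw [mul_one]; gcongr
            all_goals first | exact ht0 | exact ht.2.le
    exact mul_le_mul (hg _) h1 (abs_nonneg _) hC0
  have hmain : HasDerivAt (fun t => ∑' m, F m t) (∑' m, F' m τ) τ :=
    hasDerivAt_tsum_on hI husum hderiv hbound hs0 hτ
  -- identify the function with `mlsU` near `τ`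
  have heq : (fun t => mlsU lam g t x) =ᶠ[nhds τ] (fun t => ∑' m, F m t) := by
    filter_upwards [hI.mem_nhds hτ] with t ht
    unfold mlsU
    rw [cI_eq ht.1.le ht.2.le]
  -- identify the derivative value
  have hcIτ : cI lam τ = τ := cI_eq hτ.1.le hτ.2.le
  have hAsum : Summable (fun m : ℕ =>
      g (x+m) * ((m : ℝ) * τ ^ (m-1) / (Nat.factorial m) * Real.exp (-τ))) := by
    apply Summable.of_norm_bounded
      (g := fun m : ℕ => C * ((m:ℝ) * lam ^ (m-1) / (Nat.factorial m)))
      ((summable_nat_pow_fact lam).mul_left C)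
    intro m
    rw [Real.norm_eq_abs, abs_mul]
    have hex : Real.exp (-τ) ≤ 1 := by rw [Real.exp_le_one_iff]; linarith [hτ.1]
    have hm0 : (0:ℝ) ≤ (m : ℝ) * τ ^ (m-1) / (Nat.factorial m) :=
      div_nonneg (mul_nonneg (Nat.cast_nonneg m) (pow_nonneg hτ.1.le _)) (Nat.cast_nonneg _)
    have h1 : |(m : ℝ) * τ ^ (m-1) / (Nat.factorial m) * Real.exp (-τ)|
        ≤ (m:ℝ) * lam ^ (m-1) / (Nat.factorial m) := by
      rw [abs_of_nonneg (mul_nonneg hm0 (Real.exp_pos _).le)]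
      calc (m : ℝ) * τ ^ (m-1) / (Nat.factorial m) * Real.exp (-τ)
          ≤ (m : ℝ) * τ ^ (m-1) / (Nat.factorial m) * 1 :=
            mul_le_mul_of_nonneg_left hex hm0
        _ ≤ (m:ℝ) * lam ^ (m-1) / (Nat.factorial m) := by
            rw [mul_one]; gcongr
            all_goals first | exact hτ.1.le | exact hτ.2.le
    exact mul_le_mul (hg _) h1 (abs_nonneg _) hC0
  have hBsum : Summable (fun m : ℕ =>
      g (x+m) * (τ ^ m / (Nat.factorial m) * Real.exp (-τ))) := by
    have := summable_U_term hl hg (x := x) (τ := τ)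
    rwa [hcIτ] at this
  have hval : ∑' m, F' m τ = mlsU lam g τ (x+1) - mlsU lam g τ x := by
    have hsplit : ∀ m : ℕ, F' m τ =
        g (x+m) * ((m : ℝ) * τ ^ (m-1) / (Nat.factorial m) * Real.exp (-τ))
        - g (x+m) * (τ ^ m / (Nat.factorial m) * Real.exp (-τ)) := by
      intro m; rw [hF'def]; ring
    rw [tsum_congr hsplit, Summable.tsum_sub hAsum hBsum]
    congr 1
    · -- shift
      rw [Summable.tsum_eq_zero_add hAsum]
      have h0 : g (x+0) * (((0:ℕ):ℝ) * τ ^ (0-1) / (Nat.factorial 0) * Real.exp (-τ)) = 0 := by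
        simp
      rw [h0, zero_add]
      unfold mlsU
      rw [hcIτ]
      apply tsum_congr
      intro m
      have hfac : (Nat.factorial (m+1) : ℝ) = ((m:ℝ)+1) * (Nat.factorial m) := by
        rw [Nat.factorial_succ]; push_cast; ring
      have hidx : x + (m+1) = (x+1) + m := by omega
      rw [hidx, Nat.add_sub_cancel, hfac]
      have h2 : (Nat.factorial m : ℝ) ≠ 0 := Nat.cast_ne_zero.mpr (Nat.factorial_ne_zero m)
      have h3 : ((m:ℝ)+1) ≠ 0 := by positivity
      push_cast
      field_simp
    · unfold mlsU
      rw [hcIτ]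
  rw [← hval]
  exact hmain.congr_of_eventuallyEq heq

set_option maxHeartbeats 1000000 in
/-- The convolution identity `Po(r) * Po(lam - r) = Po(lam)` integrated against `F`. -/
lemma mlsU_convolution (hl : 0 < lam) {F : ℕ → ℝ} (hF0 : ∀ y, 0 ≤ F y)
    (hFC : ∀ y, F y ≤ C) {r : ℝ} (hr0 : 0 ≤ r) (hrl : r ≤ lam) :
    ∑' x : ℕ, po r x * mlsU lam F (lam - r) x = ∑' y : ℕ, po lam y * F y := by
  have hC0 : 0 ≤ C := (hF0 0).trans (hFC 0)
  have hFabs : ∀ y, |F y| ≤ C := fun y => abs_le.mpr ⟨by linarith [hF0 y], hFC y⟩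
  have hcI : cI lam (lam - r) = lam - r := cI_eq (by linarith) (by linarith)
  set τ : ℝ := lam - r with hτdef
  have hτ0 : 0 ≤ τ := by rw [hτdef]; linarith
  have hτl : τ ≤ lam := by rw [hτdef]; linarith
  set W : ℕ → ℝ := fun m => τ ^ m / (Nat.factorial m) * Real.exp (-τ) with hWdef
  have hW0 : ∀ m, 0 ≤ W m := fun m => by
    rw [hWdef]; positivity
  have hWle : ∀ m, W m ≤ lam ^ m / (Nat.factorial m) := by
    intro m
    rw [hWdef]
    have hex : Real.exp (-τ) ≤ 1 := by rw [Real.exp_le_one_iff]; linarith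
    calc τ ^ m / (Nat.factorial m) * Real.exp (-τ)
        ≤ τ ^ m / (Nat.factorial m) * 1 := by
          apply mul_le_mul_of_nonneg_left hex (by positivity)
      _ ≤ lam ^ m / (Nat.factorial m) := by
          rw [mul_one]; gcongr
          all_goals first | exact hτ0 | exact hτl
  have hWsum : Summable W :=
    Summable.of_norm_bounded (summable_pow_fact lam)
      (fun m => by rw [Real.norm_eq_abs, abs_of_nonneg (hW0 m)]; exact hWle m)
  have hposum : Summable (po r) :=
    Summable.of_norm_bounded (summable_pow_fact lam) (fun x => po_le_of_mem hr0 hrl x)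
  have hpo0 : ∀ x, 0 ≤ po r x := by
    intro x
    unfold po
    positivity
  set P : ℕ × ℕ → ℝ := fun p => po r p.1 * (F (p.1 + p.2) * W p.2) with hPdef
  have hP0 : ∀ p, 0 ≤ P p := fun p =>
    mul_nonneg (hpo0 _) (mul_nonneg (hF0 _) (hW0 _))
  have hPsum : Summable P := by
    refine Summable.of_nonneg_of_le hP0 (fun p => ?_)
      ((Summable.mul_of_nonneg hposum hWsum hpo0 hW0).mul_left C)
    show P p ≤ C * (po r p.1 * W p.2)
    rw [hPdef]
    calc po r p.1 * (F (p.1 + p.2) * W p.2) ≤ po r p.1 * (C * W p.2) := by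
          apply mul_le_mul_of_nonneg_left _ (hpo0 _)
          exact mul_le_mul_of_nonneg_right (hFC _) (hW0 _)
      _ = C * (po r p.1 * W p.2) := by ring
  -- Step 1: LHS as an iterated sum
  have hstep1 : ∑' x : ℕ, po r x * mlsU lam F (lam - r) x = ∑' p : ℕ × ℕ, P p := by
    rw [Summable.tsum_prod hPsum]
    apply tsum_congr
    intro x
    unfold mlsU
    rw [hcI, ← tsum_mul_left]
  rw [hstep1]
  -- Step 2: regroup along antidiagonals
  have hsig : Summable (fun σ : (Σ n : ℕ, {x // x ∈ Finset.HasAntidiagonal.antidiagonal n}) =>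
      P (Finset.HasAntidiagonal.sigmaAntidiagonalEquivProd σ)) :=
    (Equiv.summable_iff _).mpr hPsum
  have hstep2 : ∑' p : ℕ × ℕ, P p
      = ∑' n : ℕ, ∑ kl ∈ Finset.HasAntidiagonal.antidiagonal n, P kl := by
    rw [← Finset.HasAntidiagonal.sigmaAntidiagonalEquivProd.tsum_eq P]
    rw [Summable.tsum_sigma' (fun n => (hasSum_fintype _).summable) hsig]
    apply tsum_congr
    intro n
    rw [← Finset.tsum_subtype (Finset.HasAntidiagonal.antidiagonal n) P]
    rfl
  rw [hstep2]
  -- Step 3: evaluate each antidiagonal sum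
  apply tsum_congr
  intro n
  rw [Finset.Nat.sum_antidiagonal_eq_sum_range_succ_mk]
  have hterm : ∀ k ∈ Finset.range (n+1),
      P (k, n - k) = (Real.exp (-lam) / (Nat.factorial n) * F n)
        * (r ^ k * τ ^ (n-k) * (Nat.choose n k : ℝ)) := by
    intro k hk
    have hkn : k ≤ n := Nat.lt_succ_iff.mp (Finset.mem_range.mp hk)
    have hadd : k + (n - k) = n := by omega
    have hfac : (Nat.choose n k : ℝ) * (Nat.factorial k) * (Nat.factorial (n-k))
        = (Nat.factorial n) := by
      rw [← Nat.cast_mul, ← Nat.cast_mul]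
      exact_mod_cast Nat.choose_mul_factorial_mul_factorial hkn
    have hknz : (Nat.factorial k : ℝ) ≠ 0 := Nat.cast_ne_zero.mpr (Nat.factorial_ne_zero _)
    have hnknz : (Nat.factorial (n-k) : ℝ) ≠ 0 := Nat.cast_ne_zero.mpr (Nat.factorial_ne_zero _)
    have hnnz : (Nat.factorial n : ℝ) ≠ 0 := Nat.cast_ne_zero.mpr (Nat.factorial_ne_zero _)
    have hexp : Real.exp (-r) * Real.exp (-τ) = Real.exp (-lam) := by
      rw [← Real.exp_add]
      congr 1
      rw [hτdef]; ring
    have hkey : (1:ℝ) / ((Nat.factorial k : ℝ) * (Nat.factorial (n-k)))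
        = (Nat.choose n k : ℝ) / (Nat.factorial n) := by
      rw [div_eq_div_iff (by positivity) (by positivity), one_mul]
      linear_combination -hfac
    rw [hPdef]
    show po r k * (F (k + (n-k)) * W (n-k)) = _
    rw [hadd, hWdef]
    have hexpand : po r k * (F n * (τ ^ (n-k) / (Nat.factorial (n-k)) * Real.exp (-τ)))
        = (Real.exp (-r) * Real.exp (-τ)) * F n * (r ^ k * τ ^ (n-k))
          * ((1:ℝ) / ((Nat.factorial k : ℝ) * (Nat.factorial (n-k)))) := by
      unfold po
      field_simp
    rw [hexpand, hkey, hexp]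
    ring
  rw [Finset.sum_congr rfl hterm, ← Finset.mul_sum]
  have hbinom : ∑ k ∈ Finset.range (n+1), r ^ k * τ ^ (n-k) * (Nat.choose n k : ℝ)
      = lam ^ n := by
    rw [← add_pow]
    congr 1
    rw [hτdef]; ring
  rw [hbinom]
  unfold po
  ring

end flow



section Vlemmas

variable {lam : ℝ} {g : ℕ → ℝ} {al be : ℝ}

lemma gIcc_abs (hv : ∀ x : ℕ, g x ∈ Set.Icc al be) (hal : 0 < al) : ∀ y, |g y| ≤ be :=
  fun y => abs_le.mpr ⟨by linarith [(hv y).1, (hv y).2, hal], (hv y).2⟩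

lemma mlsU_mem_Icc (hl : 0 < lam) (hv : ∀ x : ℕ, g x ∈ Set.Icc al be) (hal : 0 < al)
    (τ : ℝ) (x : ℕ) : mlsU lam g τ x ∈ Set.Icc al be :=
  ⟨le_mlsU hl (fun y => (hv y).1) hal.le (gIcc_abs hv hal) τ x,
    mlsU_le hl (fun y => (hv y).2) (fun y => hal.le.trans (hv y).1) τ x⟩

lemma mlsV_continuous (hl : 0 < lam) (hv : ∀ x, g x ∈ Set.Icc al be) (hal : 0 < al) :
    Continuous (mlsV lam g) := by
  have hC := gIcc_abs hv hal
  unfold mlsV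
  apply continuous_tsum _
    ((summable_pow_fact lam).mul_right (be * (|Real.log al| + |Real.log be|)))
  · intro x r
    rw [Real.norm_eq_abs, abs_mul]
    apply mul_le_mul (po_le_of_mem (cI_nonneg lam r) (cI_le lam r hl.le) x)
      (Psi_abs_le (mlsU_mem_Icc hl hv hal _ x) hal) (abs_nonneg _)
      (by positivity)
  · intro x
    apply Continuous.mul
    · show Continuous fun r => (cI lam r) ^ x * Real.exp (-(cI lam r)) / (Nat.factorial x)
      exact (((continuous_cI lam).pow x).mul ((continuous_cI lam).neg.rexp)).div_const _
    · exact Real.continuous_mul_log.comp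
        ((mlsU_continuous hl hC x).comp (continuous_const.sub (continuous_cI lam)))

lemma mlsV_zero (hl : 0 < lam) (hv : ∀ x, g x ∈ Set.Icc al be) (hal : 0 < al) :
    mlsV lam g 0 = Psi (∑' y : ℕ, po lam y * g y) := by
  have hC := gIcc_abs hv hal
  unfold mlsV
  have h0 : cI lam 0 = 0 := cI_eq le_rfl hl.le
  rw [h0]
  rw [tsum_eq_single 0]
  · have hpo0 : po 0 0 = 1 := by unfold po; simp
    rw [hpo0, one_mul, sub_zero, mlsU_lam hl hC]
  · intro x hx
    rcases Nat.exists_eq_succ_of_ne_zero hx with ⟨n, rfl⟩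
    have : po 0 (n+1) = 0 := by unfold po; simp [zero_pow]
    rw [this, zero_mul]

lemma mlsV_lam (hl : 0 < lam) (hv : ∀ x, g x ∈ Set.Icc al be) (hal : 0 < al) :
    mlsV lam g lam = ∑' x : ℕ, po lam x * Psi (g x) := by
  unfold mlsV
  have h0 : cI lam lam = lam := cI_eq hl.le le_rfl
  rw [h0, sub_self]
  apply tsum_congr
  intro x
  rw [mlsU_zero hl]

lemma mlsV_hasDerivAt (hl : 0 < lam) (hv : ∀ x, g x ∈ Set.Icc al be) (hal : 0 < al)
    {r : ℝ} (hr : r ∈ Set.Ioo (0:ℝ) lam) :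
    HasDerivAt (mlsV lam g)
      (∑' x : ℕ, po r x * Phi (mlsU lam g (lam - r) (x+1)) (mlsU lam g (lam - r) x)) r := by
  classical
  have hC := gIcc_abs hv hal
  have hbe : 0 < be := lt_of_lt_of_le hal ((hv 0).1.trans (hv 0).2)
  set CL : ℝ := |Real.log al| + |Real.log be| with hCLdef
  have hCL0 : 0 ≤ CL := by rw [hCLdef]; positivity
  set Cp : ℝ := be * CL with hCpdef
  have hCp0 : 0 ≤ Cp := by rw [hCpdef]; positivity
  set u : ℝ → ℕ → ℝ := fun t x => mlsU lam g (lam - t) x with hudef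
  have humem : ∀ t x, u t x ∈ Set.Icc al be := fun t x => mlsU_mem_Icc hl hv hal _ x
  have hupos : ∀ t x, 0 < u t x := fun t x => lt_of_lt_of_le hal (humem t x).1
  have huabs : ∀ t x, |u t x| ≤ be := fun t x =>
    abs_le.mpr ⟨by linarith [(humem t x).1, hal], (humem t x).2⟩
  set F : ℕ → ℝ → ℝ := fun x t => po t x * Psi (u t x) with hFdef
  set F' : ℕ → ℝ → ℝ := fun x t =>
    ((if x = 0 then 0 else po t (x-1)) - po t x) * Psi (u t x)
      + po t x * ((Real.log (u t x) + 1) * ((u t (x+1) - u t x) * (-1))) with hF'def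
  have hI : IsOpen (Set.Ioo (0:ℝ) lam) := isOpen_Ioo
  have hderiv : ∀ x, ∀ t ∈ Set.Ioo (0:ℝ) lam, HasDerivAt (F x) (F' x t) t := by
    intro x t ht
    have hUd : HasDerivAt (fun t => u t x) ((u t (x+1) - u t x) * (-1)) t := by
      have h1 : HasDerivAt (fun t : ℝ => lam - t) (-1) t := (hasDerivAt_id t).const_sub lam
      have h2 := mlsU_hasDerivAt hl hC (τ := lam - t)
        ⟨by linarith [ht.2], by linarith [ht.1]⟩ x
      have h3 := HasDerivAt.comp t h2 h1
      simpa [hudef, Function.comp_def] using h3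
    have hPsid : HasDerivAt (fun t => Psi (u t x))
        ((Real.log (u t x) + 1) * ((u t (x+1) - u t x) * (-1))) t := by
      have h3 := Real.hasDerivAt_mul_log (hupos t x).ne'
      have h4 := HasDerivAt.comp t h3 hUd
      simpa [Psi, Function.comp_def] using h4
    exact (po_hasDerivAt x t).mul hPsid
  set bb : ℕ → ℝ := fun x =>
    ((if x = 0 then (0:ℝ) else lam^(x-1)/(Nat.factorial (x-1))) + lam^x/(Nat.factorial x)) * Cp
      + lam^x/(Nat.factorial x) * ((CL + 1) * (2*be)) with hbbdef
  have hshift_sum : Summable (fun x : ℕ =>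
      (if x = 0 then (0:ℝ) else lam^(x-1)/(Nat.factorial (x-1)))) := by
    rw [← summable_nat_add_iff 1]
    apply Summable.congr (summable_pow_fact lam)
    intro x
    rw [if_neg (Nat.succ_ne_zero x), Nat.add_sub_cancel]
  have hbbsum : Summable bb := by
    apply Summable.add
    · exact (hshift_sum.add (summable_pow_fact lam)).mul_right _
    · exact (summable_pow_fact lam).mul_right _
  have hbound : ∀ x, ∀ t ∈ Set.Ioo (0:ℝ) lam, |F' x t| ≤ bb x := by
    intro x t ht
    have hpo1 : |po t x| ≤ lam^x/(Nat.factorial x) := po_le_of_mem ht.1.le ht.2.le x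
    have hpo2 : |(if x = 0 then (0:ℝ) else po t (x-1))|
        ≤ (if x = 0 then (0:ℝ) else lam^(x-1)/(Nat.factorial (x-1))) := by
      split_ifs
      · simp
      · exact po_le_of_mem ht.1.le ht.2.le _
    have hPsiu : |Psi (u t x)| ≤ Cp := Psi_abs_le (humem t x) hal
    have hlogu : |Real.log (u t x) + 1| ≤ CL + 1 :=
      (abs_add_le _ _).trans (add_le_add (abs_log_le (humem t x) hal) (by norm_num))
    have hdiff : |(u t (x+1) - u t x) * (-1)| ≤ 2 * be := by
      rw [abs_mul]
      simp only [abs_neg, abs_one, mul_one]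
      calc |u t (x+1) - u t x| ≤ |u t (x+1)| + |u t x| := abs_sub _ _
        _ ≤ be + be := add_le_add (huabs t (x+1)) (huabs t x)
        _ = 2 * be := by ring
    have h1 : |((if x = 0 then (0:ℝ) else po t (x-1)) - po t x)|
        ≤ (if x = 0 then (0:ℝ) else lam^(x-1)/(Nat.factorial (x-1))) + lam^x/(Nat.factorial x) :=
      (abs_sub _ _).trans (add_le_add hpo2 hpo1)
    calc |F' x t| ≤ |((if x = 0 then (0:ℝ) else po t (x-1)) - po t x) * Psi (u t x)|
          + |po t x * ((Real.log (u t x) + 1) * ((u t (x+1) - u t x) * (-1)))| := by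
          rw [hF'def]; exact abs_add_le _ _
      _ ≤ ((if x = 0 then (0:ℝ) else lam^(x-1)/(Nat.factorial (x-1)))
            + lam^x/(Nat.factorial x)) * Cp
          + lam^x/(Nat.factorial x) * ((CL + 1) * (2*be)) := by
          apply add_le_add
          · rw [abs_mul]
            exact mul_le_mul h1 hPsiu (abs_nonneg _) (by positivity)
          · rw [abs_mul, abs_mul]
            apply mul_le_mul hpo1 (mul_le_mul hlogu hdiff (abs_nonneg _) (by linarith))
              (by positivity) (by positivity)
      _ = bb x := by rw [hbbdef]
  have hs0 : ∀ t ∈ Set.Ioo (0:ℝ) lam, Summable (fun x => F x t) := by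
    intro t ht
    apply Summable.of_norm_bounded (g := fun x : ℕ => lam^x/(Nat.factorial x) * Cp)
      ((summable_pow_fact lam).mul_right Cp)
    intro x
    rw [hFdef, Real.norm_eq_abs, abs_mul]
    exact mul_le_mul (po_le_of_mem ht.1.le ht.2.le x) (Psi_abs_le (humem t x) hal)
      (abs_nonneg _) (by positivity)
  have hmain : HasDerivAt (fun t => ∑' x, F x t) (∑' x, F' x r) r :=
    hasDerivAt_tsum_on hI hbbsum hderiv hbound hs0 hr
  have heq : mlsV lam g =ᶠ[nhds r] (fun t => ∑' x, F x t) := by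
    filter_upwards [hI.mem_nhds hr] with t ht
    unfold mlsV
    rw [cI_eq ht.1.le ht.2.le]
  -- summability facts at r
  have hAsum : Summable (fun x => (if x = 0 then (0:ℝ) else po r (x-1)) * Psi (u r x)) := by
    apply Summable.of_norm_bounded (g := fun x : ℕ =>
        (if x = 0 then (0:ℝ) else lam^(x-1)/(Nat.factorial (x-1))) * Cp)
      (hshift_sum.mul_right Cp)
    intro x
    rw [Real.norm_eq_abs, abs_mul]
    apply mul_le_mul _ (Psi_abs_le (humem r x) hal) (abs_nonneg _)
    · split_ifs
      · simp
      · positivity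
    · split_ifs
      · simp
      · exact po_le_of_mem hr.1.le hr.2.le _
  have hBsum : Summable (fun x => po r x * Psi (u r x)) := hs0 r hr
  have hB'sum : Summable (fun x => po r x * Psi (u r (x+1))) := by
    apply Summable.of_norm_bounded (g := fun x : ℕ => lam^x/(Nat.factorial x) * Cp)
      ((summable_pow_fact lam).mul_right Cp)
    intro x
    rw [Real.norm_eq_abs, abs_mul]
    exact mul_le_mul (po_le_of_mem hr.1.le hr.2.le x) (Psi_abs_le (humem r (x+1)) hal)
      (abs_nonneg _) (by positivity)
  have hCsum : Summable (fun x =>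
      po r x * ((Real.log (u r x) + 1) * ((u r (x+1) - u r x) * (-1)))) := by
    apply Summable.of_norm_bounded (g := fun x : ℕ => lam^x/(Nat.factorial x) * ((CL+1) * (2*be)))
      ((summable_pow_fact lam).mul_right _)
    intro x
    rw [Real.norm_eq_abs, abs_mul, abs_mul]
    apply mul_le_mul (po_le_of_mem hr.1.le hr.2.le x)
    · apply mul_le_mul ((abs_add_le _ _).trans
        (add_le_add (abs_log_le (humem r x) hal) (by norm_num)))
      · rw [abs_mul]
        simp only [abs_neg, abs_one, mul_one]
        calc |u r (x+1) - u r x| ≤ |u r (x+1)| + |u r x| := abs_sub _ _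
          _ ≤ be + be := add_le_add (huabs r (x+1)) (huabs r x)
          _ = 2 * be := by ring
      · exact abs_nonneg _
      · linarith
    · positivity
    · positivity
  have hval : ∑' x, F' x r
      = ∑' x : ℕ, po r x * Phi (u r (x+1)) (u r x) := by
    have hsplit : ∀ x, F' x r = (if x = 0 then (0:ℝ) else po r (x-1)) * Psi (u r x)
        + (po r x * ((Real.log (u r x) + 1) * ((u r (x+1) - u r x) * (-1)))
            - po r x * Psi (u r x)) := by
      intro x; rw [hF'def]; ring
    rw [tsum_congr hsplit, Summable.tsum_add hAsum (hCsum.sub hBsum)]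
    have h1 : ∑' x, (if x = 0 then (0:ℝ) else po r (x-1)) * Psi (u r x)
        = ∑' x, po r x * Psi (u r (x+1)) := by
      rw [Summable.tsum_eq_zero_add hAsum]
      have h0 : (if (0:ℕ) = 0 then (0:ℝ) else po r (0-1)) * Psi (u r 0) = 0 := by simp
      rw [h0, zero_add]
      apply tsum_congr
      intro x
      rw [if_neg (Nat.succ_ne_zero x), Nat.add_sub_cancel]
    rw [h1, ← Summable.tsum_add hB'sum (hCsum.sub hBsum)]
    apply tsum_congr
    intro x
    have hPhiEq : Phi (u r (x+1)) (u r x) = Psi (u r (x+1)) - Psi (u r x)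
        - (Real.log (u r x) + 1) * (u r (x+1) - u r x) := by
      unfold Phi Psi; ring
    rw [hPhiEq]; ring
  rw [show (∑' x : ℕ, po r x * Phi (mlsU lam g (lam - r) (x+1)) (mlsU lam g (lam - r) x))
      = ∑' x, F' x r from hval.symm]
  exact hmain.congr_of_eventuallyEq heq

end Vlemmas

/-! ### The core entropy inequality -/

/-- Core modified log-Sobolev inequality for bounded densities. -/
lemma core (lam : ℝ) (hl : 0 < lam) (v : ℕ → ℝ) (al be : ℝ) (hal : 0 < al)
    (hv : ∀ x, v x ∈ Set.Icc al be) :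
    ∑' x : ℕ, po lam x * Psi (v x)
      ≤ Psi (∑' x : ℕ, po lam x * v x)
        + lam * ∑' x : ℕ, po lam x * Phi (v (x+1)) (v x) := by
  have hbe : 0 < be := lt_of_lt_of_le hal ((hv 0).1.trans (hv 0).2)
  have hC := gIcc_abs hv hal
  set CL : ℝ := |Real.log al| + |Real.log be| with hCLdef
  obtain ⟨c, hc, hslope⟩ := exists_hasDerivAt_eq_slope (mlsV lam v)
    (fun r => ∑' x : ℕ, po r x * Phi (mlsU lam v (lam - r) (x+1)) (mlsU lam v (lam - r) x))
    hl ((mlsV_continuous hl hv hal).continuousOn)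
    (fun r hr => mlsV_hasDerivAt hl hv hal hr)
  set K := ∑' x : ℕ, po lam x * Phi (v (x+1)) (v x) with hKdef
  have hpoc0 : ∀ x, 0 ≤ po c x := by
    intro x
    unfold po
    have := hc.1.le
    positivity
  have hder_le : ∑' x : ℕ, po c x * Phi (mlsU lam v (lam - c) (x+1)) (mlsU lam v (lam - c) x)
      ≤ K := by
    have hF0 : ∀ y, 0 ≤ Phi (v (y+1)) (v y) := fun y =>
      Phi_nonneg (lt_of_lt_of_le hal (hv _).1) (lt_of_lt_of_le hal (hv _).1)
    have hFC : ∀ y, Phi (v (y+1)) (v y) ≤ be * CL + be := fun y =>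
      Phi_le_bound (hv _) (hv _) hal
    have hFabs : ∀ y, |Phi (v (y+1)) (v y)| ≤ be * CL + be := fun y =>
      abs_le.mpr ⟨by linarith [hF0 y, hFC y], hFC y⟩
    have hconv := mlsU_convolution hl hF0 hFC hc.1.le hc.2.le
    have hsum1 : Summable (fun x =>
        po c x * Phi (mlsU lam v (lam - c) (x+1)) (mlsU lam v (lam - c) x)) := by
      apply Summable.of_norm_bounded (g := fun x : ℕ => lam^x/(Nat.factorial x) * (be * CL + be))
        ((summable_pow_fact lam).mul_right _)
      intro x
      rw [Real.norm_eq_abs, abs_mul]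
      apply mul_le_mul (po_le_of_mem hc.1.le hc.2.le x)
      · rw [abs_of_nonneg (Phi_nonneg
          (lt_of_lt_of_le hal (mlsU_mem_Icc hl hv hal _ (x+1)).1)
          (lt_of_lt_of_le hal (mlsU_mem_Icc hl hv hal _ x).1))]
        exact Phi_le_bound (mlsU_mem_Icc hl hv hal _ (x+1)) (mlsU_mem_Icc hl hv hal _ x) hal
      · exact abs_nonneg _
      · positivity
    have hsum2 : Summable (fun x =>
        po c x * mlsU lam (fun y => Phi (v (y+1)) (v y)) (lam - c) x) := by
      apply Summable.of_norm_bounded (g := fun x : ℕ => lam^x/(Nat.factorial x) * (be * CL + be))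
        ((summable_pow_fact lam).mul_right _)
      intro x
      rw [Real.norm_eq_abs, abs_mul]
      apply mul_le_mul (po_le_of_mem hc.1.le hc.2.le x)
      · rw [abs_of_nonneg (le_mlsU hl hF0 le_rfl hFabs _ x)]
        exact mlsU_le hl hFC (fun y => hF0 y) _ x
      · exact abs_nonneg _
      · positivity
    calc ∑' x : ℕ, po c x * Phi (mlsU lam v (lam - c) (x+1)) (mlsU lam v (lam - c) x)
        ≤ ∑' x : ℕ, po c x * mlsU lam (fun y => Phi (v (y+1)) (v y)) (lam - c) x := by
          apply Summable.tsum_le_tsum _ hsum1 hsum2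
          intro x
          exact mul_le_mul_of_nonneg_left
            (mlsU_jensen hl (fun y => (hv y).1) (fun y => (hv y).2) hal _ x) (hpoc0 x)
      _ = K := hconv
  rw [mlsV_lam hl hv hal, mlsV_zero hl hv hal, sub_zero] at hslope
  have h2 : (∑' x : ℕ, po lam x * Psi (v x)) - Psi (∑' y : ℕ, po lam y * v y)
      = (∑' x : ℕ, po c x * Phi (mlsU lam v (lam - c) (x+1)) (mlsU lam v (lam - c) x)) * lam := by
    rw [hslope]
    field_simp
  have h3 : (∑' x : ℕ, po c x * Phi (mlsU lam v (lam - c) (x+1)) (mlsU lam v (lam - c) x)) * lam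
      ≤ K * lam := mul_le_mul_of_nonneg_right hder_le hl.le
  have h4 : (∑' x : ℕ, po lam x * v x) = (∑' y : ℕ, po lam y * v y) := rfl
  nlinarith [h2, h3]

/-! ### Clipping and limit helpers -/

noncomputable def clipN (N : ℕ) (t : ℝ) : ℝ :=
  max (Real.exp (-(N:ℝ))) (min (Real.exp (N:ℝ)) t)

lemma clipN_pos (N : ℕ) (t : ℝ) : 0 < clipN N t :=
  lt_of_lt_of_le (Real.exp_pos _) (le_max_left _ _)

lemma clipN_mem (N : ℕ) (t : ℝ) :
    clipN N t ∈ Set.Icc (Real.exp (-(N:ℝ))) (Real.exp (N:ℝ)) := by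
  constructor
  · exact le_max_left _ _
  · apply max_le
    · apply Real.exp_le_exp.mpr
      simp [neg_le_self_iff]
    · exact min_le_left _ _

lemma clipN_le_bound (N : ℕ) {t : ℝ} (ht : 0 ≤ t) : clipN N t ≤ t + 1 := by
  apply max_le
  · have : Real.exp (-(N:ℝ)) ≤ 1 := by
      rw [Real.exp_le_one_iff]; simp
    linarith
  · exact le_trans (min_le_right _ _) (by linarith)

lemma clipN_zero (N : ℕ) : clipN N 0 = Real.exp (-(N:ℝ)) := by
  unfold clipN
  rw [min_eq_right (Real.exp_pos _).le, max_eq_left (Real.exp_pos _).le]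

lemma clipN_eventually {t : ℝ} (ht : 0 < t) :
    ∀ᶠ N : ℕ in atTop, clipN N t = t := by
  filter_upwards [eventually_ge_atTop ⌈|Real.log t|⌉₊] with N hN
  have h1 : |Real.log t| ≤ (N:ℝ) := le_trans (Nat.le_ceil _) (Nat.cast_le.mpr hN)
  have h2 : t ≤ Real.exp (N:ℝ) := by
    rw [← Real.exp_log ht]
    exact Real.exp_le_exp.mpr (le_trans (le_abs_self _) h1)
  have h3 : Real.exp (-(N:ℝ)) ≤ t := by
    rw [← Real.exp_log ht]
    apply Real.exp_le_exp.mpr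
    have := neg_abs_le (Real.log t)
    linarith
  unfold clipN
  rw [min_eq_right h2, max_eq_right h3]

lemma tendsto_exp_neg_nat : Tendsto (fun N : ℕ => Real.exp (-(N:ℝ))) atTop (nhds 0) :=
  Real.tendsto_exp_neg_atTop_nhds_zero.comp tendsto_natCast_atTop_atTop

lemma tendsto_nat_mul_exp_neg_nat :
    Tendsto (fun N : ℕ => (N:ℝ) * Real.exp (-(N:ℝ))) atTop (nhds 0) := by
  have h := (Real.tendsto_pow_mul_exp_neg_atTop_nhds_zero 1).comp
    (tendsto_natCast_atTop_atTop (R := ℝ))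
  simpa [Function.comp_def] using h

lemma clipN_tendsto {t : ℝ} (ht : 0 ≤ t) :
    Tendsto (fun N : ℕ => clipN N t) atTop (nhds t) := by
  rcases eq_or_lt_of_le ht with h0 | h0
  · have : (fun N : ℕ => clipN N t) = fun N : ℕ => Real.exp (-(N:ℝ)) := by
      funext N; rw [← h0, clipN_zero]
    rw [this, ← h0]
    exact tendsto_exp_neg_nat
  · apply Tendsto.congr' _ (tendsto_const_nhds (x := t))
    filter_upwards [clipN_eventually h0] with N hN
    exact hN.symm

lemma tendsto_Psi_clipN {t : ℝ} (ht : 0 ≤ t) :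
    Tendsto (fun N : ℕ => Psi (clipN N t)) atTop (nhds (Psi t)) :=
  (Real.continuous_mul_log.continuousAt).tendsto.comp (clipN_tendsto ht)

lemma tendsto_Phi_clipN {a b : ℝ} (ha : 0 ≤ a) (hb : 0 ≤ b) (hba : b = 0 → a = 0) :
    Tendsto (fun N : ℕ => Phi (clipN N a) (clipN N b)) atTop (nhds (Phi a b)) := by
  rcases eq_or_lt_of_le hb with hb0 | hb0
  · -- b = 0, hence a = 0
    have ha0 : a = 0 := hba hb0.symm
    subst ha0
    rw [← hb0]
    have : (fun N : ℕ => Phi (clipN N 0) (clipN N 0)) = fun _ : ℕ => Phi 0 0 := by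
      funext N
      have h1 : Phi (clipN N 0) (clipN N 0) = 0 := by unfold Phi; ring
      have h2 : Phi (0:ℝ) 0 = 0 := by unfold Phi; ring
      rw [h1, h2]
    rw [this]
    exact tendsto_const_nhds
  rcases eq_or_lt_of_le ha with ha0 | ha0
  · -- a = 0, b > 0
    rw [← ha0, Phi_zero_left]
    have hev : (fun N : ℕ => Phi (clipN N 0) (clipN N b)) =ᶠ[atTop] fun N : ℕ =>
        -((N:ℝ) * Real.exp (-(N:ℝ))) - Real.exp (-(N:ℝ)) * Real.log b
          - Real.exp (-(N:ℝ)) + b := by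
      filter_upwards [clipN_eventually hb0] with N hN
      rw [clipN_zero, hN]
      unfold Phi
      rw [Real.log_exp]
      ring
    have hlim : Tendsto (fun N : ℕ =>
        -((N:ℝ) * Real.exp (-(N:ℝ))) - Real.exp (-(N:ℝ)) * Real.log b
          - Real.exp (-(N:ℝ)) + b) atTop (nhds b) := by
      have h1 := tendsto_nat_mul_exp_neg_nat.neg
      have h2 := tendsto_exp_neg_nat.mul_const (Real.log b)
      have h3 := ((h1.sub h2).sub tendsto_exp_neg_nat).add_const b
      simpa using h3
    exact Tendsto.congr' hev.symm hlim
  · -- a > 0, b > 0 : eventually constant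
    apply Tendsto.congr' _ (tendsto_const_nhds (x := Phi a b))
    filter_upwards [clipN_eventually ha0, clipN_eventually hb0] with N h1 h2
    rw [h1, h2]

lemma Psi_abs_le_one {u : ℝ} (h0 : 0 ≤ u) (h1 : u ≤ 1) : |Psi u| ≤ 1 := by
  rcases eq_or_lt_of_le h0 with hu0 | hu0
  · rw [← hu0]; unfold Psi; simp
  · have hlog : Real.log u ≤ 0 := Real.log_nonpos h0 h1
    have hneg : u * Real.log u ≤ 0 := by nlinarith
    have habs : |Psi u| = -(u * Real.log u) := by
      unfold Psi
      rw [abs_of_nonpos hneg]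
    rw [habs]
    have hinv := Real.log_le_sub_one_of_pos (show 0 < u⁻¹ by positivity)
    rw [Real.log_inv] at hinv
    have h2 := mul_le_mul_of_nonneg_left hinv h0
    have h3 : u * (u⁻¹ - 1) = 1 - u := by field_simp
    nlinarith

lemma Psi_mono_one {u v : ℝ} (hu : 1 ≤ u) (huv : u ≤ v) : Psi u ≤ Psi v := by
  unfold Psi
  apply mul_le_mul huv (Real.log_le_log (by linarith) huv) (Real.log_nonneg hu) (by linarith)

lemma Psi_nonneg_one {u : ℝ} (hu : 1 ≤ u) : 0 ≤ Psi u :=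
  mul_nonneg (by linarith) (Real.log_nonneg hu)

/-! ### The main analytic inequality -/

lemma main_ineq (f : ℕ → ℝ) (lam : ℝ) (hf0 : ∀ i, 0 ≤ f i) (hfs : HasSum f 1)
    (hmean : HasSum (fun i : ℕ => (i : ℝ) * f i) lam) (hpos : 0 < lam)
    (hdown : ∀ i, f i = 0 → f (i+1) = 0)
    (hsum : Summable (fun i : ℕ => (((i:ℝ)+1) * f (i+1) / lam)
      * Real.log ((((i:ℝ)+1) * f (i+1) / lam) / f i))) :
    Summable (fun i : ℕ => f i * Real.log (f i / po lam i)) ∧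
    ∑' i : ℕ, f i * Real.log (f i / po lam i)
      ≤ lam * ∑' i : ℕ, (((i:ℝ)+1) * f (i+1) / lam)
          * Real.log ((((i:ℝ)+1) * f (i+1) / lam) / f i) := by
  classical
  have hπ : ∀ x, 0 < po lam x := po_pos hpos
  set S : ℕ → ℝ := fun i => ((i:ℝ)+1) * f (i+1) / lam with hSdef
  set g : ℕ → ℝ := fun x => f x / po lam x with hgdef
  have hfg : ∀ x, f x = po lam x * g x := by
    intro x
    show f x = po lam x * (f x / po lam x)
    rw [← mul_div_assoc, mul_comm (po lam x) (f x), mul_div_assoc,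
      div_self (hπ x).ne', mul_one]
  have hg0 : ∀ x, 0 ≤ g x := fun x => div_nonneg (hf0 x) (hπ x).le
  have hgdown : ∀ x, g x = 0 → g (x+1) = 0 := by
    intro x hx
    have hfx : f x = 0 := by
      have h := hfg x
      rw [hx, mul_zero] at h
      exact h
    rw [hgdef]
    simp only []
    rw [hdown x hfx, zero_div]
  have hfsum : Summable f := hfs.summable
  -- `S` is a pmf
  have hS1 : HasSum (fun i : ℕ => ((i:ℝ)+1) * f (i+1)) lam := by
    have h0 : HasSum (fun n : ℕ => ((n+1 : ℕ):ℝ) * f (n+1)) lam := by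
      apply (hasSum_nat_add_iff (f := fun i : ℕ => (i:ℝ) * f i) 1).mpr
      simpa using hmean
    have heq : (fun n : ℕ => ((n+1:ℕ):ℝ) * f (n+1)) = fun n : ℕ => ((n:ℝ)+1) * f (n+1) := by
      funext n; push_cast; ring
    rwa [heq] at h0
  have hS : HasSum S 1 := by
    have h := hS1.div_const lam
    rw [div_self hpos.ne'] at h
    exact h
  have hπg1 : ∑' x, po lam x * g x = 1 := by
    rw [show (fun x => po lam x * g x) = f from funext fun x => (hfg x).symm]
    exact hfs.tsum_eq
  have hπg' : ∀ x, po lam x * g (x+1) = S x := by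
    intro x
    rw [hgdef, hSdef]
    simp only []
    have hps := po_succ lam x
    have h1 : po lam (x+1) ≠ 0 := (hπ (x+1)).ne'
    field_simp
    linear_combination (-f (x+1)) * hps
  -- pointwise bridges
  have hbridgeL : ∀ x, f x * Real.log (f x / po lam x) = po lam x * Psi (g x) := by
    intro x
    have h1 : f x / po lam x = g x := rfl
    rw [h1, hfg x]
    unfold Psi
    ring
  have hbridgeR : ∀ x, po lam x * Phi (g (x+1)) (g x)
      = S x * Real.log (S x / f x) - S x + f x := by
    intro x
    rcases eq_or_lt_of_le (hf0 x) with hfx0 | hfx0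
    · -- f x = 0, so f (x+1) = 0, S x = 0, g x = g (x+1) = 0
      have hfx : f x = 0 := hfx0.symm
      have hfx1 : f (x+1) = 0 := hdown x hfx
      have hgx : g x = 0 := by rw [hgdef]; simp [hfx]
      have hgx1 : g (x+1) = 0 := by rw [hgdef]; simp [hfx1]
      have hSx : S x = 0 := by rw [hSdef]; simp [hfx1]
      rw [hgx, hgx1, hSx, hfx]
      unfold Phi
      simp
    rcases eq_or_lt_of_le (hf0 (x+1)) with hfx10 | hfx10
    · -- f (x+1) = 0, f x > 0
      have hfx1 : f (x+1) = 0 := hfx10.symm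
      have hgx1 : g (x+1) = 0 := by rw [hgdef]; simp [hfx1]
      have hSx : S x = 0 := by rw [hSdef]; simp [hfx1]
      rw [hgx1, hSx, Phi_zero_left]
      have h1 : po lam x * g x = f x := (hfg x).symm
      rw [h1]
      simp
    · -- both positive
      have hgx : 0 < g x := div_pos hfx0 (hπ x)
      have hgx1 : 0 < g (x+1) := div_pos hfx10 (hπ (x+1))
      have hSx : 0 < S x := by
        rw [hSdef]
        have : (0:ℝ) < (x:ℝ)+1 := by positivity
        positivity
      have hratio : S x / f x = g (x+1) / g x := by
        rw [show f x = po lam x * g x from hfg x, ← hπg' x]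
        rw [mul_div_mul_left _ _ (hπ x).ne']
      have hlog : Real.log (S x / f x) = Real.log (g (x+1)) - Real.log (g x) := by
        rw [hratio, Real.log_div hgx1.ne' hgx.ne']
      rw [hlog]
      unfold Phi
      rw [← hπg' x, hfg x]
      ring
  -- summability of the Phi series and its value
  have hsumPhi : Summable (fun x => po lam x * Phi (g (x+1)) (g x)) := by
    apply Summable.congr _ (fun x => (hbridgeR x).symm)
    exact (hsum.sub hS.summable).add hfsum
  have htsumPhi : ∑' x, po lam x * Phi (g (x+1)) (g x)
      = ∑' i : ℕ, S i * Real.log (S i / f i) := by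
    rw [tsum_congr hbridgeR]
    rw [show (fun x => S x * Real.log (S x / f x) - S x + f x)
        = fun x => (S x * Real.log (S x / f x) - S x) + f x from rfl]
    rw [Summable.tsum_add (hsum.sub hS.summable) hfsum, Summable.tsum_sub hsum hS.summable,
      hS.tsum_eq, hfs.tsum_eq]
    ring
  have hPhi0 : ∀ x, 0 ≤ Phi (g (x+1)) (g x) := by
    intro x
    apply Phi_nonneg' (hg0 _) (hg0 _) (hgdown x)
  -- clipped versions
  set gc : ℕ → ℕ → ℝ := fun N x => clipN N (g x) with hgcdef
  have hvN : ∀ N : ℕ, ∀ x, gc N x ∈ Set.Icc (Real.exp (-(N:ℝ))) (Real.exp (N:ℝ)) :=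
    fun N x => clipN_mem N (g x)
  have hcore : ∀ N : ℕ, ∑' x : ℕ, po lam x * Psi (gc N x)
      ≤ Psi (∑' x : ℕ, po lam x * gc N x)
        + lam * ∑' x : ℕ, po lam x * Phi (gc N (x+1)) (gc N x) :=
    fun N => core lam hpos (gc N) _ _ (Real.exp_pos _) (hvN N)
  -- limit of the mean
  have hmean_lim : Tendsto (fun N : ℕ => ∑' x, po lam x * gc N x) atTop (nhds 1) := by
    rw [show (1:ℝ) = ∑' x, po lam x * g x from hπg1.symm]
    apply tendsto_tsum_of_dominated_convergence
      (bound := fun x => po lam x * (g x + 1))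
    · exact Summable.congr ((hfsum).add (summable_po hpos)) (fun x => by rw [hfg x]; ring)
    · intro x
      exact (clipN_tendsto (hg0 x)).const_mul (po lam x)
    · apply Filter.Eventually.of_forall
      intro N x
      rw [Real.norm_eq_abs, abs_mul, abs_of_nonneg (hπ x).le,
        abs_of_nonneg (clipN_pos N (g x)).le]
      exact mul_le_mul_of_nonneg_left (clipN_le_bound N (hg0 x)) (hπ x).le
  have hPsi_mean_lim : Tendsto (fun N : ℕ => Psi (∑' x, po lam x * gc N x)) atTop (nhds 0) := by
    have h := (Real.continuous_mul_log.continuousAt).tendsto.comp hmean_lim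
    have h1 : Psi 1 = 0 := by unfold Psi; simp
    rw [← h1]
    exact h
  -- limit of the Phi sums
  have hPhi_lim : Tendsto (fun N : ℕ => ∑' x, po lam x * Phi (gc N (x+1)) (gc N x)) atTop
      (nhds (∑' x, po lam x * Phi (g (x+1)) (g x))) := by
    apply tendsto_tsum_of_dominated_convergence
      (bound := fun x => po lam x * Phi (g (x+1)) (g x))
    · exact hsumPhi
    · intro x
      exact (tendsto_Phi_clipN (hg0 (x+1)) (hg0 x) (hgdown x)).const_mul (po lam x)
    · apply Filter.Eventually.of_forall
      intro N x
      rw [Real.norm_eq_abs, abs_mul, abs_of_nonneg (hπ x).le,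
        abs_of_nonneg (Phi_nonneg (clipN_pos _ _) (clipN_pos _ _))]
      apply mul_le_mul_of_nonneg_left _ (hπ x).le
      exact Phi_clip (hg0 _) (hg0 _) (hgdown x) (Real.exp_pos _)
        (Real.exp_le_exp.mpr (by simp [neg_le_self_iff]))
  -- elementary facts about clipping relative to the region `1 ≤ g x`
  have hgc_ge_one : ∀ N : ℕ, ∀ x, 1 ≤ g x → 1 ≤ gc N x := by
    intro N x hx
    simp only [hgcdef]
    apply le_max_of_le_right
    apply le_min _ hx
    rw [Real.one_le_exp_iff]
    positivity
  have hgc_le_g : ∀ N : ℕ, ∀ x, 1 ≤ g x → gc N x ≤ g x := by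
    intro N x hx
    simp only [hgcdef]
    apply max_le _ (min_le_right _ _)
    calc Real.exp (-(N:ℝ)) ≤ 1 := by rw [Real.exp_le_one_iff]; simp
      _ ≤ g x := hx
  have hgc_le_one : ∀ N : ℕ, ∀ x, ¬ (1 ≤ g x) → gc N x ≤ 1 := by
    intro N x hx
    simp only [hgcdef]
    apply max_le
    · rw [Real.exp_le_one_iff]; simp
    · exact le_trans (min_le_right _ _) (by linarith)
  -- the split of the entropy sum
  set aN : ℕ → ℕ → ℝ := fun N x => po lam x * Psi (gc N x) with haNdef
  set aa : ℕ → ℝ := fun x => po lam x * Psi (g x) with haadef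
  set aP : ℕ → ℝ := fun x => if 1 ≤ g x then aa x else 0 with haPdef
  set aQ : ℕ → ℝ := fun x => if 1 ≤ g x then 0 else aa x with haQdef
  set aPN : ℕ → ℕ → ℝ := fun N x => if 1 ≤ g x then aN N x else 0 with haPNdef
  set aQN : ℕ → ℕ → ℝ := fun N x => if 1 ≤ g x then 0 else aN N x with haQNdef
  have hsumaN : ∀ N, Summable (aN N) := fun N =>
    summable_po_bdd hpos (fun x => Psi_abs_le (hvN N x) (Real.exp_pos _))
  have hsumaPN : ∀ N, Summable (aPN N) := by
    intro N
    apply Summable.of_norm_bounded (hsumaN N).abs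
    intro x
    simp only [haPNdef, Real.norm_eq_abs]
    split_ifs
    · exact le_refl _
    · simp [abs_nonneg]
  have hsumaQN : ∀ N, Summable (aQN N) := by
    intro N
    apply Summable.of_norm_bounded (hsumaN N).abs
    intro x
    simp only [haQNdef, Real.norm_eq_abs]
    split_ifs
    · simp [abs_nonneg]
    · exact le_refl _
  have hsplitN : ∀ N x, aN N x = aPN N x + aQN N x := by
    intro N x
    simp only [haPNdef, haQNdef]
    split_ifs <;> ring
  -- uniform upper bound on the right-hand sides
  have hRHS_lim : Tendsto (fun N : ℕ => Psi (∑' x, po lam x * gc N x)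
      + lam * ∑' x, po lam x * Phi (gc N (x+1)) (gc N x)) atTop
      (nhds (0 + lam * ∑' x, po lam x * Phi (g (x+1)) (g x))) :=
    hPsi_mean_lim.add (hPhi_lim.const_mul lam)
  obtain ⟨B1, hB1⟩ := hRHS_lim.bddAbove_range
  have hB1' : ∀ N : ℕ, Psi (∑' x, po lam x * gc N x)
      + lam * ∑' x, po lam x * Phi (gc N (x+1)) (gc N x) ≤ B1 :=
    fun N => hB1 (Set.mem_range_self N)
  have hQNlower : ∀ N : ℕ, -1 ≤ ∑' x, aQN N x := by
    intro N
    have h1 : ∑' x, -(po lam x) = -1 := by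
      rw [tsum_neg, tsum_po hpos]
    rw [← h1]
    apply Summable.tsum_le_tsum _ (summable_po hpos).neg (hsumaQN N)
    intro x
    simp only [haQNdef]
    split_ifs with h
    · simp [(hπ x).le]
    · have h2 : |Psi (gc N x)| ≤ 1 :=
        Psi_abs_le_one (clipN_pos N (g x)).le (hgc_le_one N x h)
      have h3 : -1 ≤ Psi (gc N x) := by
        have := abs_le.mp h2
        linarith [this.1]
      calc -(po lam x) = po lam x * (-1) := by ring
        _ ≤ po lam x * Psi (gc N x) := mul_le_mul_of_nonneg_left h3 (hπ x).le
  -- Step A : summability of `aP`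
  have haP0 : ∀ x, 0 ≤ aP x := by
    intro x
    simp only [haPdef]
    split_ifs with h
    · exact mul_nonneg (hπ x).le (Psi_nonneg_one h)
    · exact le_refl 0
  have haPN0 : ∀ N x, 0 ≤ aPN N x := by
    intro N x
    simp only [haPNdef]
    split_ifs with h
    · exact mul_nonneg (hπ x).le (Psi_nonneg_one (hgc_ge_one N x h))
    · exact le_refl 0
  have haP_bdd : ∀ n : ℕ, ∑ x ∈ Finset.range n, aP x ≤ B1 + 1 := by
    intro n
    set N₀ := Finset.sup (Finset.range n) (fun x => ⌈|Real.log (g x)|⌉₊) with hN₀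
    have hclip : ∀ x ∈ Finset.range n, 1 ≤ g x → gc N₀ x = g x := by
      intro x hx hgx
      have h1 : (⌈|Real.log (g x)|⌉₊ : ℝ) ≤ (N₀:ℝ) :=
        Nat.cast_le.mpr (Finset.le_sup (f := fun x => ⌈|Real.log (g x)|⌉₊) hx)
      have h2 : |Real.log (g x)| ≤ (N₀:ℝ) := le_trans (Nat.le_ceil _) h1
      have hgpos : 0 < g x := lt_of_lt_of_le one_pos hgx
      simp only [hgcdef]
      show max (Real.exp (-(N₀:ℝ))) (min (Real.exp (N₀:ℝ)) (g x)) = g x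
      rw [min_eq_right, max_eq_right]
      · rw [← Real.exp_log hgpos]
        apply Real.exp_le_exp.mpr
        linarith [neg_abs_le (Real.log (g x))]
      · rw [← Real.exp_log hgpos]
        apply Real.exp_le_exp.mpr
        linarith [le_abs_self (Real.log (g x))]
    have heq : ∑ x ∈ Finset.range n, aP x = ∑ x ∈ Finset.range n, aPN N₀ x := by
      apply Finset.sum_congr rfl
      intro x hx
      simp only [haPdef, haPNdef]
      split_ifs with h
      · simp only [haadef, haNdef]
        rw [hclip x hx h]
      · rfl
    rw [heq]
    have h1 : ∑ x ∈ Finset.range n, aPN N₀ x ≤ ∑' x, aPN N₀ x :=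
      Summable.sum_le_tsum _ (fun x _ => haPN0 N₀ x) (hsumaPN N₀)
    have h2 : ∑' x, aPN N₀ x = (∑' x, aN N₀ x) - ∑' x, aQN N₀ x := by
      rw [eq_sub_iff_add_eq, ← Summable.tsum_add (hsumaPN N₀) (hsumaQN N₀)]
      exact (tsum_congr (hsplitN N₀)).symm
    have h3 : ∑' x, aN N₀ x ≤ B1 := le_trans (hcore N₀) (hB1' N₀)
    have h4 := hQNlower N₀
    linarith
  have hsum_aP : Summable aP :=
    summable_of_sum_range_le haP0 haP_bdd
  -- Step B : limits of the two parts
  have haP_lim : Tendsto (fun N : ℕ => ∑' x, aPN N x) atTop (nhds (∑' x, aP x)) := by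
    apply tendsto_tsum_of_dominated_convergence (bound := aP) hsum_aP
    · intro x
      simp only [haPdef, haPNdef]
      by_cases h : 1 ≤ g x
      · simp only [if_pos h]
        simp only [haNdef, haadef]
        exact (tendsto_Psi_clipN (hg0 x)).const_mul (po lam x)
      · simp only [if_neg h]
        exact tendsto_const_nhds
    · apply Filter.Eventually.of_forall
      intro N x
      simp only [haPdef, haPNdef, Real.norm_eq_abs]
      by_cases h : 1 ≤ g x
      · simp only [if_pos h]
        simp only [haNdef, haadef]
        rw [abs_of_nonneg (mul_nonneg (hπ x).le
          (Psi_nonneg_one (hgc_ge_one N x h)))]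
        apply mul_le_mul_of_nonneg_left _ (hπ x).le
        exact Psi_mono_one (hgc_ge_one N x h) (hgc_le_g N x h)
      · simp only [if_neg h, abs_zero]
        exact le_refl 0
  have hsum_aQ : Summable aQ := by
    apply Summable.of_norm_bounded (summable_po hpos)
    intro x
    simp only [haQdef, Real.norm_eq_abs]
    split_ifs with h
    · simp [(hπ x).le]
    · simp only [haadef]
      rw [abs_mul, abs_of_nonneg (hπ x).le]
      calc po lam x * |Psi (g x)| ≤ po lam x * 1 := by
            apply mul_le_mul_of_nonneg_left _ (hπ x).le
            exact Psi_abs_le_one (hg0 x) (by linarith)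
        _ = po lam x := mul_one _
  have haQ_lim : Tendsto (fun N : ℕ => ∑' x, aQN N x) atTop (nhds (∑' x, aQ x)) := by
    apply tendsto_tsum_of_dominated_convergence (bound := po lam) (summable_po hpos)
    · intro x
      simp only [haQdef, haQNdef]
      by_cases h : 1 ≤ g x
      · simp only [if_pos h]
        exact tendsto_const_nhds
      · simp only [if_neg h]
        simp only [haNdef, haadef]
        exact (tendsto_Psi_clipN (hg0 x)).const_mul (po lam x)
    · apply Filter.Eventually.of_forall
      intro N x
      simp only [haQNdef, Real.norm_eq_abs]
      split_ifs with h
      · simp [(hπ x).le]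
      · simp only [haNdef]
        rw [abs_mul, abs_of_nonneg (hπ x).le]
        calc po lam x * |Psi (gc N x)| ≤ po lam x * 1 := by
              apply mul_le_mul_of_nonneg_left _ (hπ x).le
              exact Psi_abs_le_one (clipN_pos N (g x)).le (hgc_le_one N x h)
          _ = po lam x := mul_one _
  have hsplit_aa : ∀ x, aa x = aP x + aQ x := by
    intro x
    simp only [haPdef, haQdef]
    split_ifs <;> ring
  have hsum_aa : Summable aa :=
    Summable.congr (hsum_aP.add hsum_aQ) (fun x => (hsplit_aa x).symm)
  have hLHS_lim : Tendsto (fun N : ℕ => ∑' x, aN N x) atTop (nhds (∑' x, aa x)) := by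
    have h1 := haP_lim.add haQ_lim
    have h2 : (∑' x, aP x) + (∑' x, aQ x) = ∑' x, aa x := by
      rw [← Summable.tsum_add hsum_aP hsum_aQ]
      exact tsum_congr (fun x => (hsplit_aa x).symm)
    rw [h2] at h1
    apply h1.congr
    intro N
    rw [← Summable.tsum_add (hsumaPN N) (hsumaQN N)]
    exact (tsum_congr (hsplitN N)).symm
  -- conclusion
  have hfinal : ∑' x, aa x ≤ lam * ∑' i : ℕ, S i * Real.log (S i / f i) := by
    have h := le_of_tendsto_of_tendsto hLHS_lim hRHS_lim
      (Filter.Eventually.of_forall hcore)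
    rw [zero_add, htsumPhi] at h
    exact h
  constructor
  · exact Summable.congr hsum_aa (fun x => (hbridgeL x).symm)
  · rw [tsum_congr hbridgeL]
    exact hfinal

end MLSAux

/-- Modified logarithmic Sobolev inequality: for a pmf `f` on `ℕ` with mean `λ ∈ (0,∞)`,
`D(f) ≤ λ · D(S(f) | f)`. -/
theorem relEntropy_le_mul_relEntropy_sizeBias (f : ℕ → ℝ) (lam : ℝ) (hf : IsPmf f)
    (hmean : Summable (fun i : ℕ => (i : ℝ) * f i)) (hlam : pmfMean f = lam)
    (hpos : 0 < lam) :
    KLpo f ≤ ENNReal.ofReal lam * KL (sizeBias f) f := by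
  classical
  by_cases hKL : (∀ i, f i = 0 → sizeBias f i = 0) ∧
      Summable (fun i : ℕ => sizeBias f i * Real.log (sizeBias f i / f i))
  · obtain ⟨hsupp, hsum0⟩ := hKL
    have hSB : sizeBias f = fun i : ℕ => ((i:ℝ)+1) * f (i+1) / lam := by
      funext i
      unfold sizeBias
      rw [hlam]
    have hdown : ∀ i, f i = 0 → f (i+1) = 0 := by
      intro i hi
      have h := hsupp i hi
      rw [hSB] at h
      simp only [] at h
      have h2 : ((i:ℝ)+1) ≠ 0 := by positivity
      rcases div_eq_zero_iff.mp h with h3 | h3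
      · rcases mul_eq_zero.mp h3 with h4 | h4
        · exact absurd h4 h2
        · exact h4
      · exact absurd h3 hpos.ne'
    have hlam' : (∑' i : ℕ, (i:ℝ) * f i) = lam := hlam
    have hmean' : HasSum (fun i : ℕ => (i:ℝ) * f i) lam := by
      have h := hmean.hasSum
      rwa [hlam'] at h
    have hsum' : Summable (fun i : ℕ => (((i:ℝ)+1) * f (i+1) / lam)
        * Real.log ((((i:ℝ)+1) * f (i+1) / lam) / f i)) := by
      have := hsum0
      rw [hSB] at this
      exact this
    obtain ⟨hsml, hineq⟩ := MLSAux.main_ineq f lam hf.1 hf.2 hmean' hpos hdown hsum'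
    have hcondL : (∀ i, po lam i = 0 → f i = 0) ∧
        Summable (fun i : ℕ => f i * Real.log (f i / po lam i)) := by
      refine ⟨fun i hi => absurd hi (MLSAux.po_pos hpos i).ne', hsml⟩
    unfold KLpo
    rw [hlam, KL, KL, if_pos hcondL, if_pos ⟨hsupp, hsum0⟩]
    rw [← ENNReal.ofReal_mul hpos.le]
    apply ENNReal.ofReal_le_ofReal
    have htsum : (∑' i : ℕ, sizeBias f i * Real.log (sizeBias f i / f i))
        = ∑' i : ℕ, (((i:ℝ)+1) * f (i+1) / lam)
            * Real.log ((((i:ℝ)+1) * f (i+1) / lam) / f i) := by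
      rw [hSB]
    rw [htsum]
    exact hineq
  · rw [KL, if_neg hKL]
    have hne : ENNReal.ofReal lam ≠ 0 := by
      simp only [ne_eq, ENNReal.ofReal_eq_zero, not_le]
      exact hpos
    rw [ENNReal.mul_top hne]
    exact le_top
end

section
/- Let n ≥ 2 and let q^{(1)}, ..., q^{(n)} be pmfs on Z_+ with finite means λ_1, ..., λ_n respectively, each λ_i > 0. Set q = q^{(1)} * ... * q^{(n)}, let q^{(-i)} denote the convolution of all q^{(j)} with j ≠ i, and set β_i = (1 − λ_i/Σ_{j=1}^n λ_j)/(n−1). Then D(q | S(q)) ≤ Σ_{i=1}^n β_i D(q^{(-i)} | S(q^{(-i)})) and D(S(q) | q) ≤ Σ_{i=1}^n β_i D(S(q^{(-i)}) | q^{(-i)}). -/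
open scoped BigOperators ENNReal Classical
open Filter

/-- Convolution of a finite family of pmfs on `ℕ`:
`(q⁽¹⁾ * ⋯ * q⁽ⁿ⁾)_i = ∑_{a₁+⋯+aₙ = i} ∏ⱼ q⁽ʲ⁾_{aⱼ}`. -/
noncomputable def convFam {n : ℕ} (q : Fin n → ℕ → ℝ) (i : ℕ) : ℝ :=
  ∑ a ∈ Fintype.piFinset (fun _ : Fin n => Finset.range (i + 1)),
    if (∑ j, a j) = i then ∏ j, q j (a j) else 0

/-- The point mass at `0` (identity for convolution). -/
def delta0 : ℕ → ℝ := fun i => if i = 0 then 1 else 0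

/-- `q⁽⁻ⁱ⁾`: the convolution of all `q⁽ʲ⁾` with `j ≠ i` (obtained by replacing the `i`-th
factor with the point mass at `0`). -/
noncomputable def convExcept {n : ℕ} (q : Fin n → ℕ → ℝ) (i : Fin n) : ℕ → ℝ :=
  convFam (Function.update q i delta0)

section AuxLemmas
open Finset


lemma convFam_extend {n : ℕ} (r : Fin n → ℕ → ℝ) {k K : ℕ} (h : k ≤ K) :
    convFam r k = ∑ a ∈ Fintype.piFinset (fun _ : Fin n => Finset.range (K + 1)),
      (if (∑ j, a j) = k then ∏ j, r j (a j) else 0) := by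
  unfold convFam
  apply Finset.sum_subset
  · intro a ha
    simp only [Fintype.mem_piFinset, Finset.mem_range] at *
    intro j; exact lt_of_lt_of_le (ha j) (by omega)
  · intro a _ hna
    rw [if_neg]
    intro hs; apply hna
    simp only [Fintype.mem_piFinset, Finset.mem_range] at *
    intro j
    have : a j ≤ k := hs ▸ Finset.single_le_sum (fun _ _ => Nat.zero_le _) (Finset.mem_univ j)
    omega

lemma convFam_split {n : ℕ} (w : ℕ → ℝ) (r : Fin n → ℕ → ℝ) (i : Fin n) (k : ℕ) :
    (∑ a ∈ Fintype.piFinset (fun _ : Fin n => Finset.range (k + 1)),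
      (if (∑ j, a j) = k then w (a i) * ∏ j, r j (a j) else 0))
    = ∑ j ∈ Finset.range (k + 1), w j * r i j *
        convFam (Function.update r i delta0) (k - j) := by
  classical
  have hrhs : ∀ j ∈ Finset.range (k + 1), w j * r i j *
        convFam (Function.update r i delta0) (k - j)
      = ∑ b ∈ Fintype.piFinset (fun _ : Fin n => Finset.range (k + 1)),
          (if (∑ l, b l) = k - j ∧ b i = 0 then w j * r i j * ∏ l ∈ Finset.univ.erase i, r l (b l)
           else 0) := by
    intro j hj
    rw [convFam_extend (Function.update r i delta0) (by simp at hj; omega : k - j ≤ k)]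
    rw [Finset.mul_sum]
    apply Finset.sum_congr rfl
    intro b _
    have hprod : (∏ l, (Function.update r i delta0) l (b l))
        = delta0 (b i) * ∏ l ∈ Finset.univ.erase i, r l (b l) := by
      rw [← Finset.mul_prod_erase Finset.univ _ (Finset.mem_univ i)]
      simp only [Function.update_self]
      congr 1
      apply Finset.prod_congr rfl
      intro l hl
      rw [Function.update_of_ne (Finset.ne_of_mem_erase hl)]
    by_cases hs : (∑ l, b l) = k - j
    · by_cases hbi : b i = 0
      · simp [hs, hbi, hprod, delta0]; try ring
      · simp [hs, hbi, hprod, delta0]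
    · simp [hs]
  rw [Finset.sum_congr rfl hrhs, Finset.sum_sigma']
  rw [← Finset.sum_filter, ← Finset.sum_filter]
  apply Finset.sum_nbij' (i := fun a => (⟨a i, Function.update a i 0⟩ : (_ : ℕ) × (Fin n → ℕ)))
    (j := fun p => Function.update p.2 i p.1)
  · intro a ha
    simp only [Finset.mem_filter, Finset.mem_sigma, Finset.mem_range,
      Fintype.mem_piFinset] at ha ⊢
    obtain ⟨hmem, hsum⟩ := ha
    have hai : a i ≤ k := hsum ▸ Finset.single_le_sum (fun _ _ => Nat.zero_le _) (Finset.mem_univ i)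
    have hsplit : a i + ∑ l ∈ Finset.univ.erase i, a l = k := by
      rw [Finset.add_sum_erase Finset.univ a (Finset.mem_univ i)]; exact hsum
    have hupd : ∑ l, Function.update a i 0 l = k - a i := by
      rw [Finset.sum_update_of_mem (Finset.mem_univ i), zero_add]
      have : ∑ l ∈ Finset.univ \ {i}, a l = ∑ l ∈ Finset.univ.erase i, a l := by
        rw [Finset.sdiff_singleton_eq_erase]
      omega
    refine ⟨⟨by omega, ?_⟩, hupd, by simp⟩
    intro l
    by_cases hl : l = i
    · subst hl; simp; try omega
    · rw [Function.update_of_ne hl]; exact hmem l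
  · intro p hp
    simp only [Finset.mem_filter, Finset.mem_sigma, Finset.mem_range,
      Fintype.mem_piFinset] at hp ⊢
    obtain ⟨⟨hp1, hp2⟩, hsum, hpi⟩ := hp
    constructor
    · intro l
      by_cases hl : l = i
      · subst hl; simpa using hp1
      · rw [Function.update_of_ne hl]; exact hp2 l
    · rw [Finset.sum_update_of_mem (Finset.mem_univ _)]
      have h1 : ∑ l ∈ Finset.univ \ {i}, p.2 l = ∑ l ∈ Finset.univ.erase i, p.2 l := by
        rw [Finset.sdiff_singleton_eq_erase]
      have hsplit : p.2 i + ∑ l ∈ Finset.univ.erase i, p.2 l = ∑ l, p.2 l := by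
        rw [Finset.add_sum_erase Finset.univ p.2 (Finset.mem_univ _)]
      omega
  · intro a ha
    funext l
    by_cases hl : l = i
    · subst hl; simp
    · simp [Function.update_of_ne hl]
  · rintro ⟨j, b⟩ hp
    simp only [Finset.mem_filter, Finset.mem_sigma, Finset.mem_range,
      Fintype.mem_piFinset] at hp
    obtain ⟨⟨hp1, hp2⟩, hsum, hpi⟩ := hp
    have h2 : Function.update (Function.update b i j) i 0 = b := by
      funext l
      by_cases hl : l = i
      · subst hl; simp [hpi]
      · simp [Function.update_of_ne hl]
    have h1 : Function.update b i j i = j := by simp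
    simp [h1, h2]
  · intro a ha
    simp only [Finset.mem_filter, Fintype.mem_piFinset, Finset.mem_range] at ha
    have h3 : (∏ j, r j (a j)) = r i (a i) * ∏ l ∈ Finset.univ.erase i, r l (a l) := by
      rw [← Finset.mul_prod_erase Finset.univ _ (Finset.mem_univ i)]
    rw [h3]
    have h4 : ∏ l ∈ Finset.univ.erase i, r l (Function.update a i 0 l)
        = ∏ l ∈ Finset.univ.erase i, r l (a l) := by
      apply Finset.prod_congr rfl; intro l hl
      rw [Function.update_of_ne (Finset.ne_of_mem_erase hl)]
    rw [h4]; ring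

noncomputable def sbias (f : ℕ → ℝ) (k : ℕ) : ℝ := (k + 1 : ℝ) * f (k + 1)

lemma convFam_eq_conv {n : ℕ} (r : Fin n → ℕ → ℝ) (i : Fin n) (k : ℕ) :
    convFam r k = conv (r i) (convFam (Function.update r i delta0)) k := by
  have := convFam_split (fun _ => (1 : ℝ)) r i k
  simp only [one_mul] at this
  unfold conv
  rw [← this]
  unfold convFam
  apply Finset.sum_congr rfl
  intro a _
  by_cases hc : (∑ j, a j) = k <;> simp [hc]

lemma convFam_sbias {n : ℕ} (r : Fin n → ℕ → ℝ) (k : ℕ) :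
    ((k : ℝ) + 1) * convFam r (k + 1)
      = ∑ l, conv (sbias (r l)) (convFam (Function.update r l delta0)) k := by
  have step1 : ((k : ℝ) + 1) * convFam r (k + 1)
      = ∑ l : Fin n, ∑ a ∈ Fintype.piFinset (fun _ : Fin n => Finset.range (k + 1 + 1)),
          (if (∑ j, a j) = k + 1 then ((a l : ℝ)) * ∏ j, r j (a j) else 0) := by
    rw [Finset.sum_comm]
    unfold convFam
    rw [Finset.mul_sum]
    apply Finset.sum_congr rfl
    intro a _
    by_cases hc : (∑ j, a j) = k + 1
    · simp only [hc, if_true, if_pos]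
      rw [← Finset.sum_mul]
      congr 1
      have h2 : ((∑ j, a j : ℕ) : ℝ) = ∑ j, (a j : ℝ) := by push_cast; rfl
      rw [← h2, hc]; push_cast; ring
    · simp [hc]
  rw [step1]
  apply Finset.sum_congr rfl
  intro l _
  rw [convFam_split (fun m => (m : ℝ)) r l (k + 1)]
  rw [Finset.sum_range_succ']
  simp only [Nat.cast_zero, zero_mul, add_zero, conv, sbias]
  apply Finset.sum_congr rfl
  intro m hm
  have : k + 1 - (m + 1) = k - m := by omega
  rw [this]
  push_cast
  ring

lemma convFam_delta0 {n : ℕ} : convFam (fun _ : Fin n => delta0) = delta0 := by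
  funext k
  rcases Nat.eq_zero_or_pos k with hk | hk
  · subst hk
    unfold convFam
    rw [Finset.sum_eq_single_of_mem (fun _ => 0)]
    · simp [delta0]
    · simp
    · intro a _ hne
      rw [if_neg]
      intro hs
      apply hne
      funext j
      have : a j ≤ 0 := hs ▸ Finset.single_le_sum (fun _ _ => Nat.zero_le _) (Finset.mem_univ j)
      omega
  · have : delta0 k = 0 := by simp [delta0]; omega
    rw [this]
    unfold convFam
    apply Finset.sum_eq_zero
    intro a _
    by_cases hs : (∑ j, a j) = k
    · rw [if_pos hs]
      have : ∃ j, a j ≠ 0 := by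
        by_contra h
        push_neg at h
        have : (∑ j, a j) = 0 := Finset.sum_eq_zero (fun j _ => h j)
        omega
      obtain ⟨j, hj⟩ := this
      apply Finset.prod_eq_zero (Finset.mem_univ j)
      simp [delta0, hj]
    · rw [if_neg hs]


lemma conv_nonneg' {f g : ℕ → ℝ} (hf : ∀ i, 0 ≤ f i) (hg : ∀ i, 0 ≤ g i) (k : ℕ) :
    0 ≤ conv f g k := by
  apply Finset.sum_nonneg; intro j _; exact mul_nonneg (hf j) (hg _)

lemma summable_conv {f g : ℕ → ℝ} (hf : ∀ i, 0 ≤ f i) (hg : ∀ i, 0 ≤ g i)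
    (sf : Summable f) (sg : Summable g) : Summable (conv f g) := by
  have h := summable_norm_sum_mul_range_of_summable_norm (f := f) (g := g)
    (by simpa [Real.norm_eq_abs, abs_of_nonneg, hf] using sf.congr (fun i => (abs_of_nonneg (hf i)).symm))
    (by simpa [Real.norm_eq_abs, abs_of_nonneg, hg] using sg.congr (fun i => (abs_of_nonneg (hg i)).symm))
  exact (h.of_norm).congr (fun k => rfl)

lemma tsum_conv {f g : ℕ → ℝ} (hf : ∀ i, 0 ≤ f i) (hg : ∀ i, 0 ≤ g i)
    (sf : Summable f) (sg : Summable g) :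
    ∑' k, conv f g k = (∑' k, f k) * (∑' k, g k) := by
  have h1 : Summable fun x => ‖f x‖ := sf.congr (fun i => (Real.norm_of_nonneg (hf i)).symm)
  have h2 : Summable fun x => ‖g x‖ := sg.congr (fun i => (Real.norm_of_nonneg (hg i)).symm)
  rw [tsum_mul_tsum_eq_tsum_sum_range_of_summable_norm h1 h2]
  rfl

lemma delta0_pmf : IsPmf delta0 := by
  constructor
  · intro i; unfold delta0; split <;> norm_num
  · exact hasSum_ite_eq 0 1

lemma delta0_mean_zero : (fun k : ℕ => (k : ℝ) * delta0 k) = fun _ => 0 := by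
  funext k; unfold delta0; rcases Nat.eq_zero_or_pos k with h | h
  · subst h; simp
  · rw [if_neg (by omega)]; ring

lemma delta0_mean : pmfMean delta0 = 0 := by
  unfold pmfMean; rw [delta0_mean_zero]; exact tsum_zero

lemma conv_mean_pieces (f g : ℕ → ℝ) (k : ℕ) :
    (k : ℝ) * conv f g k
      = conv (fun j : ℕ => (j : ℝ) * f j) g k + conv f (fun j : ℕ => (j : ℝ) * g j) k := by
  unfold conv
  rw [← Finset.sum_add_distrib, Finset.mul_sum]
  apply Finset.sum_congr rfl
  intro j hj
  simp only [Finset.mem_range] at hj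
  have : ((k - j : ℕ) : ℝ) = (k : ℝ) - (j : ℝ) := by
    have : j ≤ k := by omega
    push_cast [this]; ring
  beta_reduce
  rw [this]; ring

lemma conv_pmf {f g : ℕ → ℝ} (hf : IsPmf f) (hg : IsPmf g) : IsPmf (conv f g) := by
  refine ⟨conv_nonneg' hf.1 hg.1, ?_⟩
  have hs := summable_conv hf.1 hg.1 hf.2.summable hg.2.summable
  rw [hs.hasSum_iff]
  rw [tsum_conv hf.1 hg.1 hf.2.summable hg.2.summable, hf.2.tsum_eq, hg.2.tsum_eq]
  norm_num

lemma conv_mean {f g : ℕ → ℝ} (hf : IsPmf f) (hg : IsPmf g)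
    (mf : Summable (fun k : ℕ => (k : ℝ) * f k)) (mg : Summable (fun k : ℕ => (k : ℝ) * g k)) :
    Summable (fun k : ℕ => (k : ℝ) * conv f g k) ∧
      pmfMean (conv f g) = pmfMean f + pmfMean g := by
  have hnf : ∀ j : ℕ, 0 ≤ (j : ℝ) * f j := fun j => mul_nonneg (by positivity) (hf.1 j)
  have hng : ∀ j : ℕ, 0 ≤ (j : ℝ) * g j := fun j => mul_nonneg (by positivity) (hg.1 j)
  have s1 : Summable (conv (fun j : ℕ => (j : ℝ) * f j) g) :=
    summable_conv hnf hg.1 mf hg.2.summable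
  have s2 : Summable (conv f (fun j : ℕ => (j : ℝ) * g j)) :=
    summable_conv hf.1 hng hf.2.summable mg
  have hsum : Summable (fun k : ℕ => (k : ℝ) * conv f g k) := by
    apply (s1.add s2).congr
    intro k
    exact (conv_mean_pieces f g k).symm
  refine ⟨hsum, ?_⟩
  unfold pmfMean
  calc ∑' k : ℕ, (k : ℝ) * conv f g k
      = ∑' k : ℕ, (conv (fun j : ℕ => (j : ℝ) * f j) g k + conv f (fun j : ℕ => (j : ℝ) * g j) k) := by
        apply tsum_congr; intro k; exact conv_mean_pieces f g k
    _ = (∑' k : ℕ, conv (fun j : ℕ => (j : ℝ) * f j) g k) + ∑' k : ℕ, conv f (fun j : ℕ => (j : ℝ) * g j) k :=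
        Summable.tsum_add s1 s2
    _ = (∑' k : ℕ, (k : ℝ) * f k) * (∑' k : ℕ, g k) + (∑' k, f k) * (∑' k : ℕ, (k : ℝ) * g k) := by
        rw [tsum_conv hnf hg.1 mf hg.2.summable, tsum_conv hf.1 hng hf.2.summable mg]
    _ = (∑' k : ℕ, (k : ℝ) * f k) + (∑' k : ℕ, (k : ℝ) * g k) := by
        rw [hf.2.tsum_eq, hg.2.tsum_eq]; ring

lemma convFam_facts {n : ℕ} (s : Finset (Fin n)) :
    ∀ (r : Fin n → ℕ → ℝ), (∀ j, IsPmf (r j)) →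
    (∀ j, Summable (fun k : ℕ => (k : ℝ) * r j k)) →
    (∀ j ∉ s, r j = delta0) →
    IsPmf (convFam r) ∧ Summable (fun k : ℕ => (k : ℝ) * convFam r k) ∧
      pmfMean (convFam r) = ∑ j, pmfMean (r j) := by
  classical
  induction s using Finset.induction with
  | empty =>
    intro r hr hm hout
    have hrd : r = fun _ => delta0 := funext (fun j => hout j (by simp))
    subst hrd
    rw [convFam_delta0]
    refine ⟨delta0_pmf, ?_, ?_⟩
    · rw [delta0_mean_zero]; exact summable_zero
    · simp [delta0_mean]
  | @insert i t hit ih =>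
    intro r hr hm hout
    set r' := Function.update r i delta0 with hr'def
    have hr' : ∀ j, IsPmf (r' j) := by
      intro j
      by_cases hj : j = i
      · subst hj; simp [hr'def]; exact delta0_pmf
      · simpa [hr'def, Function.update_of_ne hj] using hr j
    have hm' : ∀ j, Summable (fun k : ℕ => (k : ℝ) * r' j k) := by
      intro j
      by_cases hj : j = i
      · subst hj; simp [hr'def]
        rw [show (fun k : ℕ => (k:ℝ) * delta0 k) = fun _ => 0 from delta0_mean_zero]
        exact summable_zero
      · simpa [hr'def, Function.update_of_ne hj] using hm j
    have hout' : ∀ j ∉ t, r' j = delta0 := by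
      intro j hj
      by_cases hji : j = i
      · subst hji; simp [hr'def]
      · rw [hr'def, Function.update_of_ne hji]
        exact hout j (by simp [hji, hj])
    obtain ⟨hp', hs', hmean'⟩ := ih r' hr' hm' hout'
    have heq : convFam r = conv (r i) (convFam r') := funext (convFam_eq_conv r i)
    rw [heq]
    have hcp := conv_pmf (hr i) hp'
    obtain ⟨hcs, hcm⟩ := conv_mean (hr i) hp' (hm i) hs'
    refine ⟨hcp, hcs, ?_⟩
    rw [hcm, hmean']
    have hupd : ∀ j, pmfMean (r' j) = Function.update (fun j => pmfMean (r j)) i (0:ℝ) j := by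
      intro j
      by_cases hj : j = i
      · subst hj; simp [hr'def, delta0_mean]
      · simp [hr'def, Function.update_of_ne hj]
    rw [Finset.sum_congr rfl (fun j _ => hupd j)]
    rw [Finset.sum_update_of_mem (Finset.mem_univ i), zero_add]
    rw [Finset.sdiff_singleton_eq_erase]
    rw [← Finset.add_sum_erase Finset.univ (fun j => pmfMean (r j)) (Finset.mem_univ i)]

lemma one_sub_inv_le_log {x : ℝ} (hx : 0 < x) : 1 - x⁻¹ ≤ Real.log x := by
  have h := Real.log_le_sub_one_of_pos (inv_pos.mpr hx)
  rw [Real.log_inv] at h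
  linarith

lemma log_ratio_term {a b A B : ℝ} (ha : 0 ≤ a) (hb : 0 ≤ b) (hab : b = 0 → a = 0)
    (hA : 0 < A) (hB : 0 < B) :
    a - b * (A / B) ≤ a * Real.log (a / b) - a * Real.log (A / B) := by
  rcases eq_or_lt_of_le ha with h0 | hpos
  · rw [← h0]
    simp only [zero_mul, zero_sub, sub_zero, zero_div]
    have : 0 ≤ b * (A / B) := by positivity
    linarith
  · have hbpos : 0 < b := lt_of_le_of_ne hb (fun h => by have := hab h.symm; linarith)
    have hx : 0 < (a / b) / (A / B) := by positivity
    have hlog := one_sub_inv_le_log hx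
    rw [Real.log_div (ne_of_gt (div_pos hpos hbpos)) (ne_of_gt (div_pos hA hB))] at hlog
    have hineq := mul_le_mul_of_nonneg_left hlog (le_of_lt hpos)
    calc a - b * (A / B) = a * (1 - ((a / b) / (A / B))⁻¹) := by
          field_simp
      _ ≤ a * (Real.log (a / b) - Real.log (A / B)) := hineq
      _ = a * Real.log (a / b) - a * Real.log (A / B) := by ring

lemma log_sum_ineq {ι : Type*} (s : Finset ι) (a b : ι → ℝ)
    (ha : ∀ i ∈ s, 0 ≤ a i) (hb : ∀ i ∈ s, 0 ≤ b i)
    (hab : ∀ i ∈ s, b i = 0 → a i = 0) :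
    (∑ i ∈ s, a i) * Real.log ((∑ i ∈ s, a i) / (∑ i ∈ s, b i))
      ≤ ∑ i ∈ s, a i * Real.log (a i / b i) := by
  set A := ∑ i ∈ s, a i with hAdef
  set B := ∑ i ∈ s, b i with hBdef
  rcases eq_or_lt_of_le (Finset.sum_nonneg ha) with hA0 | hApos
  · have hzero : ∀ i ∈ s, a i = 0 := by
      intro i hi
      exact (Finset.sum_eq_zero_iff_of_nonneg ha).1 hA0.symm i hi
    rw [show A = 0 from hA0.symm, zero_mul]
    apply Finset.sum_nonneg
    intro i hi
    rw [hzero i hi, zero_mul]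
  · have hBpos : 0 < B := by
      rcases eq_or_lt_of_le (Finset.sum_nonneg hb) with hB0 | h
      · exfalso
        have hbz : ∀ i ∈ s, b i = 0 := by
          intro i hi
          exact (Finset.sum_eq_zero_iff_of_nonneg hb).1 hB0.symm i hi
        have : A = 0 := Finset.sum_eq_zero (fun i hi => hab i hi (hbz i hi))
        linarith
      · exact h
    have key : ∀ i ∈ s, a i - b i * (A / B) ≤ a i * Real.log (a i / b i) - a i * Real.log (A / B) :=
      fun i hi => log_ratio_term (ha i hi) (hb i hi) (hab i hi) hApos hBpos
    have hsum := Finset.sum_le_sum key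
    rw [Finset.sum_sub_distrib, Finset.sum_sub_distrib, ← Finset.sum_mul, ← Finset.sum_mul] at hsum
    rw [← hAdef, ← hBdef] at hsum
    have : B * (A / B) = A := by field_simp
    rw [this] at hsum
    linarith

lemma klterm_ge {a b : ℝ} (ha : 0 ≤ a) (hb : 0 ≤ b) (hab : b = 0 → a = 0) :
    a - b ≤ a * Real.log (a / b) := by
  rcases eq_or_lt_of_le ha with h0 | hpos
  · rw [← h0]; simp; linarith
  · have hbpos : 0 < b := lt_of_le_of_ne hb (fun h => by have := hab h.symm; linarith)
    have hx : 0 < a / b := by positivity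
    have := one_sub_inv_le_log hx
    have h2 := mul_le_mul_of_nonneg_left this (le_of_lt hpos)
    calc a - b = a * (1 - (a / b)⁻¹) := by field_simp
      _ ≤ a * Real.log (a / b) := h2

lemma conv_smul_right (f g : ℕ → ℝ) (c : ℝ) (k : ℕ) :
    conv f (fun m => c * g m) k = c * conv f g k := by
  simp only [conv, Finset.mul_sum]; apply Finset.sum_congr rfl; intros; ring

lemma conv_add_right (f g h : ℕ → ℝ) (k : ℕ) :
    conv f (fun m => g m + h m) k = conv f g k + conv f h k := by
  simp only [conv, ← Finset.sum_add_distrib]; apply Finset.sum_congr rfl; intros; ring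

lemma conv_sub_right (f g h : ℕ → ℝ) (k : ℕ) :
    conv f (fun m => g m - h m) k = conv f g k - conv f h k := by
  simp only [conv, ← Finset.sum_sub_distrib]; apply Finset.sum_congr rfl; intros; ring

lemma conv_support {c x y : ℕ → ℝ} (hc : ∀ m, 0 ≤ c m) (hx : ∀ m, 0 ≤ x m) (hy : ∀ m, 0 ≤ y m)
    (hsupp : ∀ m, y m = 0 → x m = 0) (k : ℕ) (hk : conv c y k = 0) : conv c x k = 0 := by
  unfold conv at *
  have hterm : ∀ j ∈ Finset.range (k + 1), c j * y (k - j) = 0 :=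
    (Finset.sum_eq_zero_iff_of_nonneg (fun j _ => mul_nonneg (hc j) (hy _))).1 hk
  apply Finset.sum_eq_zero
  intro j hj
  rcases mul_eq_zero.1 (hterm j hj) with h | h
  · rw [h, zero_mul]
  · rw [hsupp _ h, mul_zero]

lemma conv_kl_le {c x y : ℕ → ℝ} (hc : ∀ m, 0 ≤ c m) (hx : ∀ m, 0 ≤ x m) (hy : ∀ m, 0 ≤ y m)
    (hsupp : ∀ m, y m = 0 → x m = 0) (k : ℕ) :
    conv c x k * Real.log (conv c x k / conv c y k)
      ≤ conv c (fun m => x m * Real.log (x m / y m)) k := by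
  have h1 := log_sum_ineq (Finset.range (k + 1)) (fun j => c j * x (k - j))
    (fun j => c j * y (k - j)) (fun j _ => mul_nonneg (hc j) (hx _))
    (fun j _ => mul_nonneg (hc j) (hy _))
    (fun j _ hb => by
      beta_reduce at hb ⊢
      rcases mul_eq_zero.1 hb with h | h
      · rw [h, zero_mul]
      · rw [hsupp _ h, mul_zero])
  refine le_trans h1 (le_of_eq ?_)
  apply Finset.sum_congr rfl
  intro j _
  beta_reduce
  rcases eq_or_lt_of_le (hc j) with hcj | hcj
  · rw [← hcj]; ring
  · by_cases hyj : y (k - j) = 0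
    · rw [hsupp _ hyj, hyj]; ring
    · rw [mul_div_mul_left _ _ (ne_of_gt hcj)]
      ring

lemma mixture_kl {n : ℕ} (β : Fin n → ℝ) (c x y : Fin n → ℕ → ℝ)
    (hβ : ∀ i, 0 < β i) (hβ1 : ∑ i, β i = 1)
    (hc : ∀ i, IsPmf (c i))
    (hxn : ∀ i m, 0 ≤ x i m) (hyn : ∀ i m, 0 ≤ y i m)
    (hxs : ∀ i, Summable (x i)) (hys : ∀ i, Summable (y i))
    (hx1 : ∀ i, ∑' m, x i m = 1) (hy1 : ∀ i, ∑' m, y i m = 1)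
    (hsupp : ∀ i m, y i m = 0 → x i m = 0)
    (hh : ∀ i, Summable (fun m => x i m * Real.log (x i m / y i m))) :
    (∀ k, (∑ i, β i * conv (c i) (y i) k) = 0 → (∑ i, β i * conv (c i) (x i) k) = 0) ∧
    Summable (fun k => (∑ i, β i * conv (c i) (x i) k) *
      Real.log ((∑ i, β i * conv (c i) (x i) k) / (∑ i, β i * conv (c i) (y i) k))) ∧
    (∑' k, (∑ i, β i * conv (c i) (x i) k) *
      Real.log ((∑ i, β i * conv (c i) (x i) k) / (∑ i, β i * conv (c i) (y i) k)))
      ≤ ∑ i, β i * ∑' m, x i m * Real.log (x i m / y i m) := by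
  classical
  set u : Fin n → ℕ → ℝ := fun i => conv (c i) (x i) with hu
  set v : Fin n → ℕ → ℝ := fun i => conv (c i) (y i) with hv
  set X : ℕ → ℝ := fun k => ∑ i, β i * u i k with hX
  set Y : ℕ → ℝ := fun k => ∑ i, β i * v i k with hY
  have hun : ∀ i k, 0 ≤ u i k := fun i k => conv_nonneg' (hc i).1 (hxn i) k
  have hvn : ∀ i k, 0 ≤ v i k := fun i k => conv_nonneg' (hc i).1 (hyn i) k
  have hXn : ∀ k, 0 ≤ X k := fun k =>
    Finset.sum_nonneg (fun i _ => mul_nonneg (hβ i).le (hun i k))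
  have hYn : ∀ k, 0 ≤ Y k := fun k =>
    Finset.sum_nonneg (fun i _ => mul_nonneg (hβ i).le (hvn i k))
  -- support transfer
  have hsuppuv : ∀ i k, v i k = 0 → u i k = 0 := fun i k hk =>
    conv_support (hc i).1 (hxn i) (hyn i) (hsupp i) k hk
  have hYX : ∀ k, Y k = 0 → X k = 0 := by
    intro k hk
    have hvz : ∀ i ∈ Finset.univ, β i * v i k = 0 :=
      (Finset.sum_eq_zero_iff_of_nonneg
        (fun i _ => mul_nonneg (hβ i).le (hvn i k))).1 hk
    apply Finset.sum_eq_zero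
    intro i hi
    have : v i k = 0 := by
      rcases mul_eq_zero.1 (hvz i hi) with h | h
      · exact absurd h (ne_of_gt (hβ i))
      · exact h
    rw [hsuppuv i k this, mul_zero]
  -- definitions for h and g
  set h : Fin n → ℕ → ℝ := fun i m => x i m * Real.log (x i m / y i m) with hhdef
  set g : Fin n → ℕ → ℝ := fun i m => h i m - x i m + y i m with hgdef
  have hgn : ∀ i m, 0 ≤ g i m := by
    intro i m
    have := klterm_ge (hxn i m) (hyn i m) (hsupp i m)
    simp only [hgdef, hhdef]
    linarith
  have hgs : ∀ i, Summable (g i) := fun i => ((hh i).sub (hxs i)).add (hys i)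
  have htsumg : ∀ i, ∑' m, g i m = ∑' m, h i m := by
    intro i
    simp only [hgdef]
    rw [Summable.tsum_add ((hh i).sub (hxs i)) (hys i), Summable.tsum_sub (hh i) (hxs i), hx1 i, hy1 i]
    ring
  -- G i = conv (c i) (g i)
  set G : Fin n → ℕ → ℝ := fun i => conv (c i) (g i) with hG
  have hGn : ∀ i k, 0 ≤ G i k := fun i k => conv_nonneg' (hc i).1 (hgn i) k
  have hGs : ∀ i, Summable (G i) := fun i => summable_conv (hc i).1 (hgn i) (hc i).2.summable (hgs i)
  have htsumG : ∀ i, ∑' k, G i k = ∑' m, h i m := by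
    intro i
    rw [hG]
    rw [tsum_conv (hc i).1 (hgn i) (hc i).2.summable (hgs i), (hc i).2.tsum_eq, one_mul]
    exact htsumg i
  -- conv of h decomposition
  have hconvh : ∀ i k, conv (c i) (h i) k = G i k + u i k - v i k := by
    intro i k
    have hfun : h i = fun m => g i m + (x i m - y i m) := by
      funext m; simp only [hgdef]; ring
    rw [hfun, conv_add_right, conv_sub_right]
    simp only [hG, hu, hv]
    ring
  -- pointwise upper bound
  have hpoint : ∀ k, X k * Real.log (X k / Y k)
      ≤ (∑ i, β i * G i k) + X k - Y k := by
    intro k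
    have hA := log_sum_ineq Finset.univ (fun i => β i * u i k) (fun i => β i * v i k)
      (fun i _ => mul_nonneg (hβ i).le (hun i k))
      (fun i _ => mul_nonneg (hβ i).le (hvn i k))
      (fun i _ hb => by
        beta_reduce at hb ⊢
        rcases mul_eq_zero.1 hb with hb' | hb'
        · exact absurd hb' (ne_of_gt (hβ i))
        · rw [hsuppuv i k hb', mul_zero])
    have hstep : ∀ i ∈ Finset.univ,
        (β i * u i k) * Real.log ((β i * u i k) / (β i * v i k))
          ≤ β i * (G i k + u i k - v i k) := by
      intro i _
      have heq : (β i * u i k) * Real.log ((β i * u i k) / (β i * v i k))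
          = β i * (u i k * Real.log (u i k / v i k)) := by
        by_cases hvk : v i k = 0
        · rw [hvk, hsuppuv i k hvk]; simp
        · rw [mul_div_mul_left _ _ (ne_of_gt (hβ i))]; ring
      rw [heq]
      have := conv_kl_le (hc i).1 (hxn i) (hyn i) (hsupp i) k
      have h2 := (hconvh i k) ▸ this
      exact mul_le_mul_of_nonneg_left h2 (hβ i).le
    have hB := Finset.sum_le_sum hstep
    have hXeq : X k * Real.log (X k / Y k)
        = (∑ i, β i * u i k) * Real.log ((∑ i, β i * u i k) / (∑ i, β i * v i k)) := rfl
    have hC : ∑ i, β i * (G i k + u i k - v i k)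
        = (∑ i, β i * G i k) + X k - Y k := by
      simp only [hX, hY, mul_add, mul_sub]
      rw [Finset.sum_sub_distrib, Finset.sum_add_distrib]
    calc X k * Real.log (X k / Y k)
        ≤ ∑ i, (β i * u i k) * Real.log ((β i * u i k) / (β i * v i k)) := hA
      _ ≤ ∑ i, β i * (G i k + u i k - v i k) := hB
      _ = (∑ i, β i * G i k) + X k - Y k := hC
  -- lower bound
  have hlow : ∀ k, X k - Y k ≤ X k * Real.log (X k / Y k) := fun k =>
    klterm_ge (hXn k) (hYn k) (hYX k)
  -- summability of X, Y
  have hus : ∀ i, Summable (u i) := fun i => summable_conv (hc i).1 (hxn i) (hc i).2.summable (hxs i)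
  have hvs : ∀ i, Summable (v i) := fun i => summable_conv (hc i).1 (hyn i) (hc i).2.summable (hys i)
  have hXs : Summable X := summable_sum (fun i _ => (hus i).mul_left (β i))
  have hYs : Summable Y := summable_sum (fun i _ => (hvs i).mul_left (β i))
  have htsumu : ∀ i, ∑' k, u i k = 1 := by
    intro i
    rw [hu]
    rw [tsum_conv (hc i).1 (hxn i) (hc i).2.summable (hxs i), (hc i).2.tsum_eq, hx1 i, one_mul]
  have htsumv : ∀ i, ∑' k, v i k = 1 := by
    intro i
    rw [hv]
    rw [tsum_conv (hc i).1 (hyn i) (hc i).2.summable (hys i), (hc i).2.tsum_eq, hy1 i, one_mul]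
  have htsumX : ∑' k, X k = 1 := by
    rw [hX, Summable.tsum_finsetSum (fun i _ => (hus i).mul_left (β i))]
    calc ∑ i, ∑' k, β i * u i k = ∑ i, β i * ∑' k, u i k := by
          apply Finset.sum_congr rfl; intro i _; exact tsum_mul_left
      _ = ∑ i, β i := by
          apply Finset.sum_congr rfl; intro i _; rw [htsumu i, mul_one]
      _ = 1 := hβ1
  have htsumY : ∑' k, Y k = 1 := by
    rw [hY, Summable.tsum_finsetSum (fun i _ => (hvs i).mul_left (β i))]
    calc ∑ i, ∑' k, β i * v i k = ∑ i, β i * ∑' k, v i k := by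
          apply Finset.sum_congr rfl; intro i _; exact tsum_mul_left
      _ = ∑ i, β i := by
          apply Finset.sum_congr rfl; intro i _; rw [htsumv i, mul_one]
      _ = 1 := hβ1
  -- N
  set N : ℕ → ℝ := fun k => ∑ i, β i * G i k with hN
  have hNs : Summable N := summable_sum (fun i _ => (hGs i).mul_left (β i))
  have htsumN : ∑' k, N k = ∑ i, β i * ∑' m, h i m := by
    rw [hN, Summable.tsum_finsetSum (fun i _ => (hGs i).mul_left (β i))]
    apply Finset.sum_congr rfl; intro i _
    rw [tsum_mul_left, htsumG i]
  -- W
  set H : ℕ → ℝ := fun k => X k * Real.log (X k / Y k) with hH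
  set W : ℕ → ℝ := fun k => H k - X k + Y k with hW
  have hWn : ∀ k, 0 ≤ W k := by
    intro k; simp only [hW]; have := hlow k; simp only [hH]; linarith
  have hWle : ∀ k, W k ≤ N k := by
    intro k; simp only [hW, hH]; have := hpoint k; simp only [hN]; linarith
  have hWs : Summable W := by
    apply Summable.of_nonneg_of_le hWn hWle hNs
  have hHs : Summable H := by
    have : H = fun k => W k + X k - Y k := by funext k; simp only [hW]; ring
    rw [this]
    exact (hWs.add hXs).sub hYs
  refine ⟨hYX, hHs, ?_⟩
  have htsumW : ∑' k, W k ≤ ∑' k, N k := Summable.tsum_le_tsum hWle hWs hNs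
  have htsumH : ∑' k, H k = ∑' k, W k := by
    have h1 : ∑' k, W k = ∑' k, H k - ∑' k, X k + ∑' k, Y k := by
      rw [hW]
      rw [Summable.tsum_add (hHs.sub hXs) hYs, Summable.tsum_sub hHs hXs]
    rw [htsumX, htsumY] at h1
    linarith
  calc ∑' k, H k = ∑' k, W k := htsumH
    _ ≤ ∑' k, N k := htsumW
    _ = ∑ i, β i * ∑' m, h i m := htsumN

lemma conv_comm (f g : ℕ → ℝ) (k : ℕ) : conv f g k = conv g f k := by
  unfold conv
  apply Finset.sum_nbij' (i := fun j => k - j) (j := fun j => k - j)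
  · intro a ha; simp only [Finset.mem_range] at *; omega
  · intro a ha; simp only [Finset.mem_range] at *; omega
  · intro a ha; simp only [Finset.mem_range] at *; omega
  · intro a ha; simp only [Finset.mem_range] at *; omega
  · intro a ha
    simp only [Finset.mem_range] at ha
    have : k - (k - a) = a := by omega
    rw [this, mul_comm]

lemma conv_assoc (f g h : ℕ → ℝ) (k : ℕ) : conv (conv f g) h k = conv f (conv g h) k := by
  unfold conv
  have lhs : ∑ j ∈ Finset.range (k + 1), (∑ m ∈ Finset.range (j + 1), f m * g (j - m)) * h (k - j)
      = ∑ p ∈ (Finset.range (k + 1)).sigma (fun j => Finset.range (j + 1)),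
          f p.2 * g (p.1 - p.2) * h (k - p.1) := by
    rw [Finset.sum_sigma]
    apply Finset.sum_congr rfl
    intro j _
    rw [Finset.sum_mul]
  have rhs : ∑ m ∈ Finset.range (k + 1), f m * (∑ t ∈ Finset.range (k - m + 1), g t * h (k - m - t))
      = ∑ p ∈ (Finset.range (k + 1)).sigma (fun m => Finset.range (k - m + 1)),
          f p.1 * g p.2 * h (k - p.1 - p.2) := by
    rw [Finset.sum_sigma]
    apply Finset.sum_congr rfl
    intro m _
    rw [Finset.mul_sum]
    apply Finset.sum_congr rfl
    intro t _
    ring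
  rw [lhs, rhs]
  apply Finset.sum_nbij' (i := fun p => ⟨p.2, p.1 - p.2⟩) (j := fun p => ⟨p.1 + p.2, p.1⟩)
  · intro p hp; simp only [Finset.mem_sigma, Finset.mem_range] at *; omega
  · intro p hp; simp only [Finset.mem_sigma, Finset.mem_range] at *; omega
  · intro p hp
    simp only [Finset.mem_sigma, Finset.mem_range] at hp
    have h1 : p.2 + (p.1 - p.2) = p.1 := by omega
    exact Sigma.ext h1 (by simp)
  · intro p hp
    simp only [Finset.mem_sigma, Finset.mem_range] at hp
    have h1 : (p.1 + p.2) - p.1 = p.2 := by omega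
    exact Sigma.ext rfl (by simp [h1])
  · intro p hp
    simp only [Finset.mem_sigma, Finset.mem_range] at hp
    have h1 : k - (p.2 + (p.1 - p.2)) = k - p.1 := by omega
    have h2 : k - p.2 - (p.1 - p.2) = k - p.1 := by omega
    show f p.2 * g (p.1 - p.2) * h (k - p.1) = f p.2 * g (p.1 - p.2) * h (k - p.2 - (p.1 - p.2))
    rw [h2]

lemma conv_sum_right {ι : Type*} (s : Finset ι) (f : ℕ → ℝ) (F : ι → ℕ → ℝ) (k : ℕ) :
    conv f (fun m => ∑ l ∈ s, F l m) k = ∑ l ∈ s, conv f (F l) k := by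
  unfold conv
  rw [Finset.sum_comm]
  apply Finset.sum_congr rfl
  intro j _
  rw [Finset.mul_sum]

lemma sbias_delta0 : sbias delta0 = fun _ => 0 := by
  funext m
  simp [sbias, delta0]


lemma sizeBias_eq_sbias (f : ℕ → ℝ) :
    sizeBias f = fun m => (1 / pmfMean f) * sbias f m := by
  funext m; simp only [sizeBias, sbias]; ring

lemma tsum_sbias {f : ℕ → ℝ} (hm : Summable fun k : ℕ => (k : ℝ) * f k) :
    Summable (sbias f) ∧ ∑' k, sbias f k = pmfMean f := by
  have key : ∀ m : ℕ, sbias f m = (fun k : ℕ => (k : ℝ) * f k) (m + 1) := by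
    intro m; simp only [sbias]; push_cast; ring
  have hs : Summable (sbias f) := by
    rw [show sbias f = fun m => (fun k : ℕ => (k : ℝ) * f k) (m + 1) from funext key]
    exact (summable_nat_add_iff 1).2 hm
  refine ⟨hs, ?_⟩
  unfold pmfMean
  rw [Summable.tsum_eq_zero_add hm]
  simp only [Nat.cast_zero, zero_mul, zero_add]
  exact tsum_congr key

lemma sizeBias_props {f : ℕ → ℝ} (hf : ∀ i, 0 ≤ f i) (hm : Summable fun k : ℕ => (k : ℝ) * f k)
    (hpos : 0 < pmfMean f) :
    (∀ k, 0 ≤ sizeBias f k) ∧ Summable (sizeBias f) ∧ ∑' k, sizeBias f k = 1 := by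
  obtain ⟨hs, ht⟩ := tsum_sbias (f := f) hm
  refine ⟨fun k => div_nonneg (mul_nonneg (by positivity) (hf _)) hpos.le, ?_, ?_⟩
  · rw [sizeBias_eq_sbias]; exact hs.mul_left _
  · rw [sizeBias_eq_sbias, tsum_mul_left, ht]
    field_simp

lemma conv_zero_left (g : ℕ → ℝ) (k : ℕ) : conv (fun _ => 0) g k = 0 := by
  unfold conv; simp

lemma conv_sbias_except {n : ℕ} (r : Fin n → ℕ → ℝ) (i : Fin n) (k : ℕ) :
    conv (r i) (sbias (convFam (Function.update r i delta0))) k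
      = ∑ l ∈ Finset.univ.erase i, conv (sbias (r l)) (convFam (Function.update r l delta0)) k := by
  classical
  set u := Function.update r i delta0 with hu
  have step1 : sbias (convFam u)
      = fun m => ∑ l, conv (sbias (u l)) (convFam (Function.update u l delta0)) m := by
    funext m
    have h := convFam_sbias u m
    simpa [sbias] using h
  rw [step1, conv_sum_right]
  rw [← Finset.add_sum_erase _ _ (Finset.mem_univ i)]
  have hi0 : conv (r i) (conv (sbias (u i)) (convFam (Function.update u i delta0))) k = 0 := by
    have hui : u i = delta0 := by rw [hu]; simp
    have : sbias (u i) = fun _ => 0 := by rw [hui]; exact sbias_delta0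
    rw [this]
    have : conv (fun _ => (0:ℝ)) (convFam (Function.update u i delta0)) = fun _ => 0 :=
      funext (conv_zero_left _)
    rw [this]
    unfold conv; simp
  rw [hi0, zero_add]
  apply Finset.sum_congr rfl
  intro l hl
  have hli : l ≠ i := Finset.ne_of_mem_erase hl
  have hul : u l = r l := by rw [hu]; exact Function.update_of_ne hli _ _
  set V := convFam (Function.update u l delta0) with hV
  have e1 : conv (r i) (conv (sbias (u l)) V) k = conv (conv (sbias (u l)) V) (r i) k :=
    conv_comm _ _ k
  have e2 : conv (conv (sbias (u l)) V) (r i) k = conv (sbias (u l)) (conv V (r i)) k :=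
    conv_assoc _ _ _ k
  have e3 : conv V (r i) = conv (r i) V := funext (fun m => conv_comm V (r i) m)
  have e4 : conv (r i) V = convFam (Function.update r l delta0) := by
    have h5 : convFam (Function.update r l delta0)
        = conv ((Function.update r l delta0) i)
            (convFam (Function.update (Function.update r l delta0) i delta0)) :=
      funext (convFam_eq_conv _ i)
    have h6 : (Function.update r l delta0) i = r i := Function.update_of_ne (Ne.symm hli) _ _
    have h7 : Function.update (Function.update r l delta0) i delta0
        = Function.update u l delta0 := by
      rw [hu]
      exact Function.update_comm hli _ _ _
    rw [h5, h6, h7]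
  rw [e1, e2, e3, e4, hul]

lemma sum_erase_count {n : ℕ} (F : Fin n → ℝ) :
    ∑ i : Fin n, ∑ l ∈ Finset.univ.erase i, F l = ((n : ℝ) - 1) * ∑ l, F l := by
  have h : ∀ i : Fin n, ∑ l ∈ Finset.univ.erase i, F l = (∑ l, F l) - F i :=
    fun i => Finset.sum_erase_eq_sub (Finset.mem_univ i)
  rw [Finset.sum_congr rfl (fun i _ => h i), Finset.sum_sub_distrib, Finset.sum_const,
    Finset.card_univ, Fintype.card_fin, nsmul_eq_mul]
  ring

lemma ofReal_sum_le' {ι : Type*} (s : Finset ι) (f : ι → ℝ) :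
    ENNReal.ofReal (∑ i ∈ s, f i) ≤ ∑ i ∈ s, ENNReal.ofReal (f i) := by
  classical
  induction s using Finset.cons_induction with
  | empty => simp
  | cons a s ha ih =>
    rw [Finset.sum_cons, Finset.sum_cons]
    exact le_trans ENNReal.ofReal_add_le (add_le_add le_rfl ih)

lemma sizeBias_convFam_decomp {n : ℕ} (q : Fin n → ℕ → ℝ) (β : Fin n → ℝ) (Λ : ℝ)
    (hΛ : pmfMean (convFam q) = Λ) (hΛ0 : Λ ≠ 0) (hn1 : ((n : ℝ) - 1) ≠ 0)
    (hβ : ∀ i, β i * (1 / pmfMean (convFam (Function.update q i delta0)))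
      = 1 / (((n : ℝ) - 1) * Λ)) (k : ℕ) :
    sizeBias (convFam q) k
      = ∑ i, β i * conv (q i) (sizeBias (convFam (Function.update q i delta0))) k := by
  have main : ∀ i, conv (q i) (sizeBias (convFam (Function.update q i delta0))) k
      = (1 / pmfMean (convFam (Function.update q i delta0))) *
          ∑ l ∈ Finset.univ.erase i, conv (sbias (q l)) (convFam (Function.update q l delta0)) k := by
    intro i
    rw [sizeBias_eq_sbias, conv_smul_right, conv_sbias_except]
  calc sizeBias (convFam q) k
      = ((k : ℝ) + 1) * convFam q (k + 1) / Λ := by rw [sizeBias, hΛ]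
    _ = (1 / (((n : ℝ) - 1) * Λ)) * (((n : ℝ) - 1) * (((k : ℝ) + 1) * convFam q (k + 1))) := by
        field_simp
    _ = (1 / (((n : ℝ) - 1) * Λ)) * (((n : ℝ) - 1) *
          ∑ l, conv (sbias (q l)) (convFam (Function.update q l delta0)) k) := by
        rw [convFam_sbias]
    _ = (1 / (((n : ℝ) - 1) * Λ)) *
          ∑ i : Fin n, ∑ l ∈ Finset.univ.erase i,
            conv (sbias (q l)) (convFam (Function.update q l delta0)) k := by
        rw [sum_erase_count]
    _ = ∑ i : Fin n, (1 / (((n : ℝ) - 1) * Λ)) *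
            ∑ l ∈ Finset.univ.erase i,
              conv (sbias (q l)) (convFam (Function.update q l delta0)) k := by
        rw [Finset.mul_sum]
    _ = ∑ i, β i * conv (q i) (sizeBias (convFam (Function.update q i delta0))) k := by
        apply Finset.sum_congr rfl
        intro i _
        rw [main i, ← hβ i]
        ring



end AuxLemmas

/-- For `n ≥ 2` pmfs with means, the relative entropy inequalities. -/
theorem relEntropy_sizeBias_convFam_le (n : ℕ) (hn : 2 ≤ n) (q : Fin n → ℕ → ℝ)
    (lam : Fin n → ℝ) (hq : ∀ i, IsPmf (q i))
    (hmean : ∀ i, Summable (fun k : ℕ => (k : ℝ) * q i k))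
    (hlam : ∀ i, pmfMean (q i) = lam i) (hpos : ∀ i, 0 < lam i) :
    KL (convFam q) (sizeBias (convFam q)) ≤
      ∑ i : Fin n, ENNReal.ofReal ((1 - lam i / ∑ j : Fin n, lam j) / ((n : ℝ) - 1)) *
        KL (convExcept q i) (sizeBias (convExcept q i)) ∧
    KL (sizeBias (convFam q)) (convFam q) ≤
      ∑ i : Fin n, ENNReal.ofReal ((1 - lam i / ∑ j : Fin n, lam j) / ((n : ℝ) - 1)) *
        KL (sizeBias (convExcept q i)) (convExcept q i) := by
  classical
  have hne : (Finset.univ : Finset (Fin n)).Nonempty :=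
    ⟨⟨0, by omega⟩, Finset.mem_univ _⟩
  obtain ⟨hQpmf, hQms, hQmean⟩ := convFam_facts Finset.univ q hq hmean (by simp)
  set Λ : ℝ := ∑ j, lam j with hΛdef
  have hΛQ : pmfMean (convFam q) = Λ := by
    rw [hQmean]; exact Finset.sum_congr rfl (fun j _ => hlam j)
  have hΛpos : 0 < Λ := Finset.sum_pos (fun i _ => hpos i) hne
  have hn1 : (0 : ℝ) < (n : ℝ) - 1 := by
    have h2n : (2 : ℝ) ≤ (n : ℝ) := by exact_mod_cast hn
    linarith
  have hupd_pmf : ∀ i j, IsPmf (Function.update q i delta0 j) := by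
    intro i j; by_cases h : j = i
    · subst h; simp only [Function.update_self]; exact delta0_pmf
    · rw [Function.update_of_ne h]; exact hq j
  have hupd_mean : ∀ i j, Summable (fun k : ℕ => (k : ℝ) * Function.update q i delta0 j k) := by
    intro i j; by_cases h : j = i
    · subst h; simp only [Function.update_self]
      rw [show (fun k : ℕ => (k : ℝ) * delta0 k) = fun _ => (0 : ℝ) from delta0_mean_zero]
      exact summable_zero
    · rw [Function.update_of_ne h]; exact hmean j
  have hQi := fun i => convFam_facts Finset.univ (Function.update q i delta0)
    (hupd_pmf i) (hupd_mean i) (by simp)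
  have hQipmf : ∀ i, IsPmf (convExcept q i) := fun i => (hQi i).1
  have hQims : ∀ i, Summable (fun k : ℕ => (k : ℝ) * convExcept q i k) := fun i => (hQi i).2.1
  have hQimean : ∀ i, pmfMean (convExcept q i) = Λ - lam i := by
    intro i
    have h2 : ∀ j, pmfMean (Function.update q i delta0 j)
        = Function.update (fun j => lam j) i (0 : ℝ) j := by
      intro j; by_cases h : j = i
      · subst h; simp only [Function.update_self]; exact delta0_mean
      · rw [Function.update_of_ne h, Function.update_of_ne h, hlam j]
    calc pmfMean (convExcept q i) = ∑ j, pmfMean (Function.update q i delta0 j) := (hQi i).2.2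
      _ = ∑ j, Function.update (fun j => lam j) i (0 : ℝ) j :=
          Finset.sum_congr rfl (fun j _ => h2 j)
      _ = Λ - lam i := by
          rw [Finset.sum_update_of_mem (Finset.mem_univ i), zero_add,
            Finset.sdiff_singleton_eq_erase, Finset.sum_erase_eq_sub (Finset.mem_univ i)]
  have hQimeanpos : ∀ i, 0 < Λ - lam i := by
    intro i
    have hcard : 0 < (Finset.univ.erase i).card := by
      rw [Finset.card_erase_of_mem (Finset.mem_univ i), Finset.card_univ, Fintype.card_fin]
      omega
    have hp : 0 < ∑ l ∈ Finset.univ.erase i, lam l :=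
      Finset.sum_pos (fun l _ => hpos l) (Finset.card_pos.mp hcard)
    have hsub : ∑ l ∈ Finset.univ.erase i, lam l = Λ - lam i :=
      Finset.sum_erase_eq_sub (Finset.mem_univ i)
    linarith [hsub ▸ hp]
  set β : Fin n → ℝ := fun i => (1 - lam i / Λ) / ((n : ℝ) - 1) with hβdef
  have hβpos : ∀ i, 0 < β i := by
    intro i
    apply div_pos _ hn1
    have h3 := hQimeanpos i
    have h4 : lam i / Λ < 1 := (div_lt_one hΛpos).mpr (by linarith)
    linarith
  have hβ1 : ∑ i, β i = 1 := by
    have hsum : ∑ i : Fin n, (1 - lam i / Λ) = (n : ℝ) - 1 := by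
      rw [Finset.sum_sub_distrib, Finset.sum_const, Finset.card_univ, Fintype.card_fin,
        nsmul_eq_mul, mul_one, ← Finset.sum_div, ← hΛdef, div_self (ne_of_gt hΛpos)]
    calc ∑ i, β i = (∑ i : Fin n, (1 - lam i / Λ)) / ((n : ℝ) - 1) := by
          rw [hβdef, Finset.sum_div]
      _ = 1 := by rw [hsum]; field_simp
  have hβμ : ∀ i, β i * (1 / pmfMean (convFam (Function.update q i delta0)))
      = 1 / (((n : ℝ) - 1) * Λ) := by
    intro i
    have h5 : pmfMean (convFam (Function.update q i delta0)) = Λ - lam i := hQimean i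
    rw [h5, hβdef]
    have h6 : Λ - lam i ≠ 0 := ne_of_gt (hQimeanpos i)
    field_simp
  have hΛQpos : 0 < pmfMean (convFam q) := by rw [hΛQ]; exact hΛpos
  obtain ⟨hSQn, hSQs, hSQ1⟩ := sizeBias_props hQpmf.1 hQms hΛQpos
  have hSQi := fun i => sizeBias_props (hQipmf i).1 (hQims i)
    (by rw [show pmfMean (convExcept q i) = Λ - lam i from hQimean i]; exact hQimeanpos i)
  have hSQdec : ∀ k, sizeBias (convFam q) k
      = ∑ i, β i * conv (q i) (sizeBias (convExcept q i)) k :=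
    fun k => sizeBias_convFam_decomp q β Λ hΛQ (ne_of_gt hΛpos) (ne_of_gt hn1) hβμ k
  have hQmix : ∀ k, convFam q k = ∑ i, β i * conv (q i) (convExcept q i) k := by
    intro k
    have h7 : ∑ i, β i * conv (q i) (convExcept q i) k = ∑ i, β i * convFam q k :=
      Finset.sum_congr rfl (fun i _ => by
        rw [show conv (q i) (convExcept q i) k = convFam q k from (convFam_eq_conv q i k).symm])
    rw [h7, ← Finset.sum_mul, hβ1, one_mul]
  constructor
  · -- Direction 1
    by_cases hcond : ∀ i, (∀ m, sizeBias (convExcept q i) m = 0 → convExcept q i m = 0) ∧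
        Summable (fun m => convExcept q i m *
          Real.log (convExcept q i m / sizeBias (convExcept q i) m))
    · obtain ⟨hYX, hHs, hle⟩ := mixture_kl β q (fun i => convExcept q i)
        (fun i => sizeBias (convExcept q i)) hβpos hβ1 hq
        (fun i => (hQipmf i).1) (fun i => (hSQi i).1)
        (fun i => (hQipmf i).2.summable) (fun i => (hSQi i).2.1)
        (fun i => (hQipmf i).2.tsum_eq) (fun i => (hSQi i).2.2)
        (fun i m => (hcond i).1 m) (fun i => (hcond i).2)
      have hsupp' : ∀ m, sizeBias (convFam q) m = 0 → convFam q m = 0 := by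
        intro m hm
        rw [hQmix m]
        exact hYX m (by rw [← hSQdec m]; exact hm)
      have hHs' : Summable (fun m => convFam q m *
          Real.log (convFam q m / sizeBias (convFam q) m)) := by
        apply hHs.congr
        intro m
        rw [hQmix m, hSQdec m]
      have hle' : (∑' m, convFam q m * Real.log (convFam q m / sizeBias (convFam q) m))
          ≤ ∑ i, β i * ∑' m, convExcept q i m *
              Real.log (convExcept q i m / sizeBias (convExcept q i) m) := by
        refine le_trans (le_of_eq ?_) hle
        apply tsum_congr
        intro m
        rw [hQmix m, hSQdec m]
      have hKL : KL (convFam q) (sizeBias (convFam q)) = ENNReal.ofReal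
          (∑' m, convFam q m * Real.log (convFam q m / sizeBias (convFam q) m)) := by
        unfold KL; rw [if_pos ⟨hsupp', hHs'⟩]
      have hKLi : ∀ i, KL (convExcept q i) (sizeBias (convExcept q i)) = ENNReal.ofReal
          (∑' m, convExcept q i m *
            Real.log (convExcept q i m / sizeBias (convExcept q i) m)) := by
        intro i; unfold KL; rw [if_pos (hcond i)]
      rw [hKL]
      calc ENNReal.ofReal
            (∑' m, convFam q m * Real.log (convFam q m / sizeBias (convFam q) m))
          ≤ ENNReal.ofReal (∑ i, β i * ∑' m, convExcept q i m *
              Real.log (convExcept q i m / sizeBias (convExcept q i) m)) :=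
            ENNReal.ofReal_le_ofReal hle'
        _ ≤ ∑ i, ENNReal.ofReal (β i * ∑' m, convExcept q i m *
              Real.log (convExcept q i m / sizeBias (convExcept q i) m)) :=
            ofReal_sum_le' _ _
        _ = ∑ i : Fin n, ENNReal.ofReal ((1 - lam i / Λ) / ((n : ℝ) - 1)) *
              KL (convExcept q i) (sizeBias (convExcept q i)) := by
            apply Finset.sum_congr rfl
            intro i _
            rw [ENNReal.ofReal_mul (hβpos i).le, hKLi i]
    · obtain ⟨i, hi⟩ := not_forall.mp hcond
      have hterm : KL (convExcept q i) (sizeBias (convExcept q i)) = ⊤ := by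
        unfold KL; rw [if_neg hi]
      have h8 : ENNReal.ofReal ((1 - lam i / Λ) / ((n : ℝ) - 1)) *
          KL (convExcept q i) (sizeBias (convExcept q i)) = ⊤ := by
        rw [hterm]
        exact ENNReal.mul_top (ne_of_gt (ENNReal.ofReal_pos.mpr (hβpos i)))
      have h9 : (∑ i : Fin n, ENNReal.ofReal ((1 - lam i / Λ) / ((n : ℝ) - 1)) *
          KL (convExcept q i) (sizeBias (convExcept q i))) = ⊤ :=
        ENNReal.sum_eq_top.mpr ⟨i, Finset.mem_univ i, h8⟩
      rw [h9]
      exact le_top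
  · -- Direction 2
    by_cases hcond : ∀ i, (∀ m, convExcept q i m = 0 → sizeBias (convExcept q i) m = 0) ∧
        Summable (fun m => sizeBias (convExcept q i) m *
          Real.log (sizeBias (convExcept q i) m / convExcept q i m))
    · obtain ⟨hYX, hHs, hle⟩ := mixture_kl β q (fun i => sizeBias (convExcept q i))
        (fun i => convExcept q i) hβpos hβ1 hq
        (fun i => (hSQi i).1) (fun i => (hQipmf i).1)
        (fun i => (hSQi i).2.1) (fun i => (hQipmf i).2.summable)
        (fun i => (hSQi i).2.2) (fun i => (hQipmf i).2.tsum_eq)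
        (fun i m => (hcond i).1 m) (fun i => (hcond i).2)
      have hsupp' : ∀ m, convFam q m = 0 → sizeBias (convFam q) m = 0 := by
        intro m hm
        rw [hSQdec m]
        exact hYX m (by rw [← hQmix m]; exact hm)
      have hHs' : Summable (fun m => sizeBias (convFam q) m *
          Real.log (sizeBias (convFam q) m / convFam q m)) := by
        apply hHs.congr
        intro m
        rw [hQmix m, hSQdec m]
      have hle' : (∑' m, sizeBias (convFam q) m *
            Real.log (sizeBias (convFam q) m / convFam q m))
          ≤ ∑ i, β i * ∑' m, sizeBias (convExcept q i) m *
              Real.log (sizeBias (convExcept q i) m / convExcept q i m) := by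
        refine le_trans (le_of_eq ?_) hle
        apply tsum_congr
        intro m
        rw [hQmix m, hSQdec m]
      have hKL : KL (sizeBias (convFam q)) (convFam q) = ENNReal.ofReal
          (∑' m, sizeBias (convFam q) m *
            Real.log (sizeBias (convFam q) m / convFam q m)) := by
        unfold KL; rw [if_pos ⟨hsupp', hHs'⟩]
      have hKLi : ∀ i, KL (sizeBias (convExcept q i)) (convExcept q i) = ENNReal.ofReal
          (∑' m, sizeBias (convExcept q i) m *
            Real.log (sizeBias (convExcept q i) m / convExcept q i m)) := by
        intro i; unfold KL; rw [if_pos (hcond i)]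
      rw [hKL]
      calc ENNReal.ofReal
            (∑' m, sizeBias (convFam q) m *
              Real.log (sizeBias (convFam q) m / convFam q m))
          ≤ ENNReal.ofReal (∑ i, β i * ∑' m, sizeBias (convExcept q i) m *
              Real.log (sizeBias (convExcept q i) m / convExcept q i m)) :=
            ENNReal.ofReal_le_ofReal hle'
        _ ≤ ∑ i, ENNReal.ofReal (β i * ∑' m, sizeBias (convExcept q i) m *
              Real.log (sizeBias (convExcept q i) m / convExcept q i m)) :=
            ofReal_sum_le' _ _
        _ = ∑ i : Fin n, ENNReal.ofReal ((1 - lam i / Λ) / ((n : ℝ) - 1)) *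
              KL (sizeBias (convExcept q i)) (convExcept q i) := by
            apply Finset.sum_congr rfl
            intro i _
            rw [ENNReal.ofReal_mul (hβpos i).le, hKLi i]
    · obtain ⟨i, hi⟩ := not_forall.mp hcond
      have hterm : KL (sizeBias (convExcept q i)) (convExcept q i) = ⊤ := by
        unfold KL; rw [if_neg hi]
      have h8 : ENNReal.ofReal ((1 - lam i / Λ) / ((n : ℝ) - 1)) *
          KL (sizeBias (convExcept q i)) (convExcept q i) = ⊤ := by
        rw [hterm]
        exact ENNReal.mul_top (ne_of_gt (ENNReal.ofReal_pos.mpr (hβpos i)))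
      have h9 : (∑ i : Fin n, ENNReal.ofReal ((1 - lam i / Λ) / ((n : ℝ) - 1)) *
          KL (sizeBias (convExcept q i)) (convExcept q i)) = ⊤ :=
        ENNReal.sum_eq_top.mpr ⟨i, Finset.mem_univ i, h8⟩
      rw [h9]
      exact le_top
end

section
/- For any pmf f on Z_+ with mean λ ∈ (0,∞), both D(S(f^{*n}) | f^{*n}) and D(f^{*n} | S(f^{*n})) are decreasing in n, i.e., for all n ≥ 1, D(S(f^{*(n+1)}) | f^{*(n+1)}) ≤ D(S(f^{*n}) | f^{*n}) and D(f^{*(n+1)} | S(f^{*(n+1)})) ≤ D(f^{*n} | S(f^{*n})). -/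
open scoped BigOperators ENNReal Classical
open Filter

/-! ### Auxiliary lemmas -/

lemma conv_eq_coeff (a b : ℕ → ℝ) (i : ℕ) :
    conv a b i = (PowerSeries.coeff i) (PowerSeries.mk a * PowerSeries.mk b) := by
  rw [PowerSeries.coeff_mul, Finset.Nat.sum_antidiagonal_eq_sum_range_succ_mk]
  simp [conv]

lemma mk_conv (a b : ℕ → ℝ) :
    PowerSeries.mk (conv a b) = PowerSeries.mk a * PowerSeries.mk b := by
  ext i
  rw [PowerSeries.coeff_mk, conv_eq_coeff]

lemma conv_comm_s14 (a b : ℕ → ℝ) : conv a b = conv b a := by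
  funext i
  rw [conv_eq_coeff, conv_eq_coeff, mul_comm]

lemma conv_right_comm (a b c : ℕ → ℝ) : conv (conv a b) c = conv (conv a c) b := by
  funext i
  rw [conv_eq_coeff, conv_eq_coeff, mk_conv, mk_conv, mul_right_comm]

lemma conv_nonneg'_s14 {a b : ℕ → ℝ} (ha : ∀ i, 0 ≤ a i) (hb : ∀ i, 0 ≤ b i) (i : ℕ) :
    0 ≤ conv a b i :=
  Finset.sum_nonneg fun j _ => mul_nonneg (ha j) (hb _)

lemma conv_div_right (a b : ℕ → ℝ) (c : ℝ) (i : ℕ) :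
    conv a (fun k => b k / c) i = conv a b i / c := by
  simp [conv, Finset.sum_div, mul_div_assoc]

lemma conv_const_mul (a b : ℕ → ℝ) (c : ℝ) (i : ℕ) :
    conv (fun j => c * a j) b i = c * conv a b i := by
  simp [conv, Finset.mul_sum, mul_assoc]

lemma summable_abs_conv {a b : ℕ → ℝ} (ha : Summable a) (hb : Summable b) :
    Summable (fun i => |conv a b i|) := by
  have ha' : Summable fun i => ‖a i‖ := by simpa [Real.norm_eq_abs] using ha.abs
  have hb' : Summable fun i => ‖b i‖ := by simpa [Real.norm_eq_abs] using hb.abs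
  simpa [Real.norm_eq_abs, conv] using
    summable_norm_sum_mul_range_of_summable_norm ha' hb'

lemma summable_conv_s14 {a b : ℕ → ℝ} (ha : Summable a) (hb : Summable b) :
    Summable (conv a b) :=
  (summable_abs_iff.mp (summable_abs_conv ha hb))

lemma tsum_conv_s14 {a b : ℕ → ℝ} (ha : Summable a) (hb : Summable b) :
    ∑' i, conv a b i = (∑' i, a i) * (∑' i, b i) := by
  have ha' : Summable fun i => ‖a i‖ := by simpa [Real.norm_eq_abs] using ha.abs
  have hb' : Summable fun i => ‖b i‖ := by simpa [Real.norm_eq_abs] using hb.abs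
  simpa [conv] using (tsum_mul_tsum_eq_tsum_sum_range_of_summable_norm ha' hb').symm

lemma convPow_nonneg {f : ℕ → ℝ} (hf : ∀ i, 0 ≤ f i) : ∀ n i, 0 ≤ convPow f n i := by
  intro n
  induction n with
  | zero => intro i; simp only [convPow]; split <;> norm_num
  | succ n ih => exact conv_nonneg'_s14 ih hf

lemma delta_summable : Summable (fun i : ℕ => if i = 0 then (1 : ℝ) else 0) :=
  (hasSum_ite_eq 0 (1 : ℝ)).summable

lemma convPow_summable {f : ℕ → ℝ} (hf : Summable f) : ∀ n, Summable (convPow f n) := by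
  intro n
  induction n with
  | zero => exact delta_summable
  | succ n ih => exact summable_conv_s14 ih hf

lemma convPow_tsum {f : ℕ → ℝ} (hf : IsPmf f) : ∀ n, ∑' i, convPow f n i = 1 := by
  intro n
  induction n with
  | zero => simpa [convPow] using (hasSum_ite_eq 0 (1 : ℝ)).tsum_eq
  | succ n ih =>
    have : convPow f (n + 1) = conv (convPow f n) f := rfl
    rw [this, tsum_conv_s14 (convPow_summable hf.2.summable n) hf.2.summable, ih,
      hf.2.tsum_eq, one_mul]

lemma mul_conv (a b : ℕ → ℝ) (i : ℕ) :
    (i : ℝ) * conv a b i =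
      conv (fun j : ℕ => (j : ℝ) * a j) b i + conv a (fun k : ℕ => (k : ℝ) * b k) i := by
  simp only [conv, Finset.mul_sum, ← Finset.sum_add_distrib]
  refine Finset.sum_congr rfl fun j hj => ?_
  have hj' : j ≤ i := Nat.lt_succ_iff.mp (Finset.mem_range.mp hj)
  have hc : ((i - j : ℕ) : ℝ) = (i : ℝ) - j := by
    rw [Nat.cast_sub hj']
  rw [hc]; ring

lemma mean_conv {a b : ℕ → ℝ} (ha : Summable a) (hb : Summable b)
    (hma : Summable (fun i : ℕ => (i : ℝ) * a i)) (hmb : Summable (fun i : ℕ => (i : ℝ) * b i)) :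
    Summable (fun i : ℕ => (i : ℝ) * conv a b i) ∧
      ∑' i : ℕ, (i : ℝ) * conv a b i =
        (∑' i : ℕ, (i : ℝ) * a i) * (∑' i, b i) + (∑' i, a i) * (∑' i : ℕ, (i : ℝ) * b i) := by
  have h1 : Summable (conv (fun j : ℕ => (j : ℝ) * a j) b) := summable_conv_s14 hma hb
  have h2 : Summable (conv a fun k : ℕ => (k : ℝ) * b k) := summable_conv_s14 ha hmb
  have heq : (fun i : ℕ => (i : ℝ) * conv a b i) =
      fun i => conv (fun j : ℕ => (j : ℝ) * a j) b i + conv a (fun k : ℕ => (k : ℝ) * b k) i :=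
    funext (mul_conv a b)
  constructor
  · rw [heq]; exact h1.add h2
  · rw [heq, Summable.tsum_add h1 h2, tsum_conv_s14 hma hb, tsum_conv_s14 ha hmb]

lemma delta_mean : (fun i : ℕ => (i : ℝ) * (if i = 0 then (1 : ℝ) else 0)) = fun _ => (0 : ℝ) := by
  funext i
  rcases Nat.eq_zero_or_pos i with h | h
  · subst h; simp
  · simp [Nat.pos_iff_ne_zero.mp h]

lemma convPow_mean (f : ℕ → ℝ) (lam : ℝ) (hf : IsPmf f)
    (hmean : Summable (fun i : ℕ => (i : ℝ) * f i)) (hlam : pmfMean f = lam) :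
    ∀ n, Summable (fun i : ℕ => (i : ℝ) * convPow f n i) ∧
      pmfMean (convPow f n) = n * lam := by
  intro n
  induction n with
  | zero =>
    constructor
    · show Summable (fun i : ℕ => (i : ℝ) * (if i = 0 then (1 : ℝ) else 0))
      rw [delta_mean]; exact summable_zero
    · show (∑' i : ℕ, (i : ℝ) * (if i = 0 then (1 : ℝ) else 0)) = _
      rw [delta_mean]; simp
  | succ n ih =>
    have hs : Summable (convPow f n) := convPow_summable hf.2.summable n
    have h := mean_conv hs hf.2.summable ih.1 hmean
    have hdef : convPow f (n + 1) = conv (convPow f n) f := rfl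
    constructor
    · rw [hdef]; exact h.1
    · show (∑' i : ℕ, (i : ℝ) * convPow f (n + 1) i) = _
      rw [hdef, h.2, hf.2.tsum_eq, convPow_tsum hf n]
      have : pmfMean (convPow f n) = n * lam := ih.2
      rw [pmfMean] at this
      rw [this]
      have : pmfMean f = lam := hlam
      rw [pmfMean] at this
      rw [this]
      push_cast
      ring

lemma deriv_conv (a b : ℕ → ℝ) (i : ℕ) :
    ((i : ℝ) + 1) * conv a b (i + 1) =
      conv (fun j : ℕ => ((j : ℝ) + 1) * a (j + 1)) b i +
        conv a (fun k : ℕ => ((k : ℝ) + 1) * b (k + 1)) i := by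
  have key : ((i : ℝ) + 1) * conv a b (i + 1) =
      (∑ j ∈ Finset.range (i + 2), (j : ℝ) * (a j * b (i + 1 - j))) +
      (∑ j ∈ Finset.range (i + 2), ((i + 1 - j : ℕ) : ℝ) * (a j * b (i + 1 - j))) := by
    rw [conv, Finset.mul_sum, ← Finset.sum_add_distrib]
    refine Finset.sum_congr rfl fun j hj => ?_
    have hj' : j ≤ i + 1 := Nat.lt_succ_iff.mp (Finset.mem_range.mp hj)
    have hc : ((i + 1 - j : ℕ) : ℝ) = ((i + 1 : ℕ) : ℝ) - j := Nat.cast_sub hj'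
    rw [hc]; push_cast; ring
  rw [key]
  congr 1
  · rw [Finset.sum_range_succ']
    simp only [Nat.cast_zero, zero_mul, add_zero]
    refine Finset.sum_congr rfl fun j hj => ?_
    have h1 : i + 1 - (j + 1) = i - j := by omega
    rw [h1]; push_cast; ring
  · rw [Finset.sum_range_succ]
    simp only [Nat.sub_self, Nat.cast_zero, zero_mul, add_zero]
    refine Finset.sum_congr rfl fun j hj => ?_
    have hj' : j ≤ i := Nat.lt_succ_iff.mp (Finset.mem_range.mp hj)
    have h1 : i + 1 - j = (i - j) + 1 := by omega
    rw [h1]; push_cast; ring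

lemma delta_conv (b : ℕ → ℝ) (i : ℕ) :
    conv (fun j => if j = 0 then (1 : ℝ) else 0) b i = b i := by
  rw [conv, Finset.sum_eq_single_of_mem 0 (Finset.mem_range.mpr (Nat.succ_pos i))]
  · simp
  · intro j _ hj0
    simp [hj0]

lemma deriv_convPow (f : ℕ → ℝ) : ∀ (n i : ℕ), ((i : ℝ) + 1) * convPow f (n + 1) (i + 1) =
    ((n : ℝ) + 1) * conv (convPow f n) (fun k : ℕ => ((k : ℝ) + 1) * f (k + 1)) i := by
  intro n
  induction n with
  | zero =>
    intro i
    have h1 : convPow f 1 = conv (fun j => if j = 0 then (1 : ℝ) else 0) f := rfl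
    have h0 : convPow f 0 = (fun j => if j = 0 then (1 : ℝ) else 0) := rfl
    rw [h1, h0, delta_conv, delta_conv]
    push_cast; ring
  | succ n ih =>
    intro i
    have hdef : convPow f (n + 2) = conv (convPow f (n + 1)) f := rfl
    rw [hdef, deriv_conv]
    have h1 : (fun j : ℕ => ((j : ℝ) + 1) * convPow f (n + 1) (j + 1)) =
        fun j => ((n : ℝ) + 1) * conv (convPow f n) (fun k : ℕ => ((k : ℝ) + 1) * f (k + 1)) j :=
      funext ih
    rw [h1, conv_const_mul]
    have h2 : conv (conv (convPow f n) fun k : ℕ => ((k : ℝ) + 1) * f (k + 1)) f i =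
        conv (convPow f (n + 1)) (fun k : ℕ => ((k : ℝ) + 1) * f (k + 1)) i := by
      have := conv_right_comm (convPow f n) (fun k : ℕ => ((k : ℝ) + 1) * f (k + 1)) f
      rw [this]
      rfl
    rw [h2]
    push_cast; ring

lemma sizeBias_convPow (f : ℕ → ℝ) (lam : ℝ) (hf : IsPmf f)
    (hmean : Summable (fun i : ℕ => (i : ℝ) * f i)) (hlam : pmfMean f = lam)
    (hpos : 0 < lam) (n : ℕ) :
    sizeBias (convPow f (n + 1)) = conv (convPow f n) (sizeBias f) := by
  funext i
  have hμ : pmfMean (convPow f (n + 1)) = ((n : ℝ) + 1) * lam := by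
    have := (convPow_mean f lam hf hmean hlam (n + 1)).2
    rw [this]; push_cast; ring
  have hsb : sizeBias f = fun k : ℕ => ((k : ℝ) + 1) * f (k + 1) / lam := by
    funext k; rw [sizeBias, hlam]
  rw [sizeBias, hμ, hsb]
  rw [conv_div_right (convPow f n) (fun k : ℕ => ((k : ℝ) + 1) * f (k + 1)) lam i]
  rw [deriv_convPow f n i]
  have hn1 : ((n : ℝ) + 1) ≠ 0 := by positivity
  field_simp

lemma sizeBias_convPow_succ (f : ℕ → ℝ) (lam : ℝ) (hf : IsPmf f)
    (hmean : Summable (fun i : ℕ => (i : ℝ) * f i)) (hlam : pmfMean f = lam)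
    (hpos : 0 < lam) (n : ℕ) :
    sizeBias (convPow f (n + 2)) = conv (sizeBias (convPow f (n + 1))) f := by
  rw [sizeBias_convPow f lam hf hmean hlam hpos (n + 1),
    sizeBias_convPow f lam hf hmean hlam hpos n]
  have hdef : convPow f (n + 1) = conv (convPow f n) f := rfl
  rw [hdef, conv_right_comm]

/-- Log-sum inequality for finite sums (with Lean's conventions `x/0 = 0`, `log 0 = 0`). -/
lemma logSum (s : Finset ℕ) (a b : ℕ → ℝ) (ha : ∀ i ∈ s, 0 ≤ a i) (hb : ∀ i ∈ s, 0 ≤ b i)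
    (hab : ∀ i ∈ s, b i = 0 → a i = 0) :
    (∑ i ∈ s, a i) * Real.log ((∑ i ∈ s, a i) / (∑ i ∈ s, b i)) ≤
      ∑ i ∈ s, a i * Real.log (a i / b i) := by
  set A := ∑ i ∈ s, a i with hA
  set B := ∑ i ∈ s, b i with hB
  rcases eq_or_lt_of_le (Finset.sum_nonneg hb) with hB0 | hB0
  · have hb0 : ∀ i ∈ s, b i = 0 :=
      (Finset.sum_eq_zero_iff_of_nonneg hb).mp hB0.symm
    have ha0 : ∀ i ∈ s, a i = 0 := fun i hi => hab i hi (hb0 i hi)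
    have hA0 : A = 0 := Finset.sum_eq_zero ha0
    rw [hA0, zero_mul]
    refine Finset.sum_nonneg fun i hi => ?_
    rw [ha0 i hi, zero_mul]
  · have key : ∀ i ∈ s, a i * Real.log (A / B) + (a i - b i * (A / B)) ≤
        a i * Real.log (a i / b i) := by
      intro i hi
      rcases eq_or_lt_of_le (ha i hi) with ha0 | ha0
      · rw [← ha0]
        have : 0 ≤ b i * (A / B) := by
          apply mul_nonneg (hb i hi)
          apply div_nonneg _ (le_of_lt hB0)
          exact Finset.sum_nonneg ha
        simp only [zero_mul, zero_add, zero_sub]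
        linarith
      · have hbi : 0 < b i := by
          rcases eq_or_lt_of_le (hb i hi) with h | h
          · exact absurd (hab i hi h.symm) (ne_of_gt ha0)
          · exact h
        have hApos : 0 < A := lt_of_lt_of_le ha0 (Finset.single_le_sum ha hi)
        have hx : (0 : ℝ) < (A / B) / (a i / b i) := by positivity
        have h1 := Real.log_le_sub_one_of_pos hx
        have hlog : Real.log ((A / B) / (a i / b i)) =
            Real.log (A / B) - Real.log (a i / b i) :=
          Real.log_div (by positivity) (by positivity)
        rw [hlog] at h1
        have h2 : a i * (Real.log (A / B) - Real.log (a i / b i)) ≤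
            a i * ((A / B) / (a i / b i) - 1) :=
          mul_le_mul_of_nonneg_left h1 (le_of_lt ha0)
        have h3 : a i * ((A / B) / (a i / b i) - 1) = b i * (A / B) - a i := by
          field_simp
        nlinarith
    calc A * Real.log (A / B) = ∑ i ∈ s, (a i * Real.log (A / B) + (a i - b i * (A / B))) := by
          rw [Finset.sum_add_distrib, Finset.sum_sub_distrib, ← Finset.sum_mul, ← Finset.sum_mul,
            ← hA, ← hB]
          have hBA : B * (A / B) = A := by have hBne : B ≠ 0 := ne_of_gt hB0; field_simp
          rw [hBA]; ring
      _ ≤ ∑ i ∈ s, a i * Real.log (a i / b i) := Finset.sum_le_sum key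

/-- Data-processing inequality for convolution with a common pmf. -/
lemma KL_conv_le (p q h : ℕ → ℝ) (hp0 : ∀ i, 0 ≤ p i) (hq0 : ∀ i, 0 ≤ q i)
    (hh0 : ∀ i, 0 ≤ h i) (hps : Summable p) (hqs : Summable q) (hhs : HasSum h 1) :
    KL (conv p h) (conv q h) ≤ KL p q := by
  by_cases hKL : (∀ i, q i = 0 → p i = 0) ∧
      Summable (fun i : ℕ => p i * Real.log (p i / q i))
  swap
  · have : KL p q = ⊤ := by rw [KL, if_neg hKL]
    rw [this]; exact le_top
  obtain ⟨hsupp, hsum⟩ := hKL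
  have hhsum : Summable h := hhs.summable
  have hh1 : ∑' i, h i = 1 := hhs.tsum_eq
  -- support condition for the convolutions
  have hsupp' : ∀ i, conv q h i = 0 → conv p h i = 0 := by
    intro i hi
    apply Finset.sum_eq_zero
    intro j hj
    have hqj : q j * h (i - j) = 0 :=
      (Finset.sum_eq_zero_iff_of_nonneg (fun j _ => mul_nonneg (hq0 j) (hh0 _))).mp hi j hj
    rcases mul_eq_zero.mp hqj with hq | hh
    · rw [hsupp j hq, zero_mul]
    · rw [hh, mul_zero]
  set a : ℕ → ℝ := fun j => p j * Real.log (p j / q j) with ha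
  set u : ℕ → ℝ := conv a h with hu
  set t : ℕ → ℝ := fun i => conv p h i * Real.log (conv p h i / conv q h i) with htdef
  have hus : Summable u := summable_conv_s14 hsum hhsum
  have huabs : Summable (fun i => |u i|) := summable_abs_conv hsum hhsum
  have hut : ∑' i, u i = ∑' i, a i := by
    rw [hu, tsum_conv_s14 hsum hhsum, hh1, mul_one]
  -- pointwise upper bound t ≤ u via the log-sum inequality
  have htu : ∀ i, t i ≤ u i := by
    intro i
    have h1 := logSum (Finset.range (i + 1)) (fun j => p j * h (i - j))
      (fun j => q j * h (i - j)) (fun j _ => mul_nonneg (hp0 j) (hh0 _))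
      (fun j _ => mul_nonneg (hq0 j) (hh0 _))
      (fun j _ hqj => by
        show p j * h (i - j) = 0
        have hqj' : q j * h (i - j) = 0 := hqj
        rcases mul_eq_zero.mp hqj' with hq | hh
        · rw [hsupp j hq, zero_mul]
        · rw [hh, mul_zero])
    have heq : (∑ j ∈ Finset.range (i + 1),
        (p j * h (i - j)) * Real.log ((p j * h (i - j)) / (q j * h (i - j)))) = u i := by
      rw [hu, conv]
      refine Finset.sum_congr rfl fun j _ => ?_
      rcases eq_or_lt_of_le (hh0 (i - j)) with h0 | h0
      · rw [← h0]; simp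
      · rw [mul_div_mul_right _ _ (ne_of_gt h0)]; ring
    calc t i = (∑ j ∈ Finset.range (i + 1), p j * h (i - j)) *
          Real.log ((∑ j ∈ Finset.range (i + 1), p j * h (i - j)) /
            (∑ j ∈ Finset.range (i + 1), q j * h (i - j))) := rfl
      _ ≤ ∑ j ∈ Finset.range (i + 1),
          (p j * h (i - j)) * Real.log ((p j * h (i - j)) / (q j * h (i - j))) := h1
      _ = u i := heq
  -- pointwise lower bound
  have hl : ∀ i, conv p h i - conv q h i ≤ t i := by
    intro i
    rcases eq_or_lt_of_le (conv_nonneg'_s14 hp0 hh0 i) with h0 | h0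
    · have ht0 : t i = 0 := by
        show conv p h i * Real.log (conv p h i / conv q h i) = 0
        rw [← h0, zero_mul]
      rw [ht0, ← h0]
      have := conv_nonneg'_s14 hq0 hh0 i
      linarith
    · have hq0' : 0 < conv q h i := by
        rcases eq_or_lt_of_le (conv_nonneg'_s14 hq0 hh0 i) with hq | hq
        · exact absurd (hsupp' i hq.symm) (ne_of_gt h0)
        · exact hq
      have hlog := Real.log_le_sub_one_of_pos (div_pos hq0' h0)
      have h2 : conv p h i * Real.log (conv q h i / conv p h i) ≤
          conv p h i * (conv q h i / conv p h i - 1) :=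
        mul_le_mul_of_nonneg_left hlog (le_of_lt h0)
      have h3 : conv p h i * (conv q h i / conv p h i - 1) =
          conv q h i - conv p h i := by field_simp
      have h4 : Real.log (conv q h i / conv p h i) =
          -Real.log (conv p h i / conv q h i) := by
        rw [← Real.log_inv, inv_div]
      rw [h4, h3] at h2
      have : t i = conv p h i * Real.log (conv p h i / conv q h i) := rfl
      nlinarith
  -- summability of t
  have hlsum : Summable (fun i => conv p h i - conv q h i) :=
    (summable_conv_s14 hps hhsum).sub (summable_conv_s14 hqs hhsum)
  have hts : Summable t := by
    have hbound : ∀ i, |t i| ≤ |u i| + |conv p h i - conv q h i| := by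
      intro i
      rw [abs_le]
      constructor
      · have h1 := hl i
        have h2 : -(|conv p h i - conv q h i|) ≤ conv p h i - conv q h i :=
          neg_abs_le _
        have h3 : (0 : ℝ) ≤ |u i| := abs_nonneg _
        linarith
      · have h1 := htu i
        have h2 : u i ≤ |u i| := le_abs_self _
        have h3 : (0 : ℝ) ≤ |conv p h i - conv q h i| := abs_nonneg _
        linarith
    exact summable_abs_iff.mp
      (Summable.of_nonneg_of_le (fun i => abs_nonneg _) hbound (huabs.add hlsum.abs))
  -- conclude
  rw [KL, if_pos ⟨hsupp', hts⟩, KL, if_pos ⟨hsupp, hsum⟩]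
  apply ENNReal.ofReal_le_ofReal
  calc (∑' i, t i) ≤ ∑' i, u i := Summable.tsum_le_tsum htu hts hus
    _ = ∑' i, a i := hut

/-- For a pmf `f` on `ℕ` with mean `λ ∈ (0,∞)`, both `D(S(f^{*n}) | f^{*n})` and
`D(f^{*n} | S(f^{*n}))` are decreasing in `n ≥ 1`. -/
theorem relEntropy_sizeBias_convPow_antitone (f : ℕ → ℝ) (lam : ℝ) (hf : IsPmf f)
    (hmean : Summable (fun i : ℕ => (i : ℝ) * f i)) (hlam : pmfMean f = lam)
    (hpos : 0 < lam) (n : ℕ) (hn : 1 ≤ n) :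
    KL (sizeBias (convPow f (n + 1))) (convPow f (n + 1)) ≤
      KL (sizeBias (convPow f n)) (convPow f n) ∧
    KL (convPow f (n + 1)) (sizeBias (convPow f (n + 1))) ≤
      KL (convPow f n) (sizeBias (convPow f n)) := by
  obtain ⟨m, rfl⟩ : ∃ m, n = m + 1 := ⟨n - 1, by omega⟩
  have hf0 := hf.1
  have hfs : Summable f := hf.2.summable
  -- size bias of f is nonneg and summable
  have hSfnn : ∀ i, 0 ≤ sizeBias f i := by
    intro i
    rw [sizeBias, hlam]
    apply div_nonneg _ (le_of_lt hpos)
    exact mul_nonneg (by positivity) (hf0 _)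
  have hSfs : Summable (sizeBias f) := by
    have h1 : Summable (fun k : ℕ => ((k : ℝ) + 1) * f (k + 1)) := by
      have := (summable_nat_add_iff 1).mpr hmean
      simpa [Nat.cast_add] using this
    have : sizeBias f = fun k : ℕ => ((k : ℝ) + 1) * f (k + 1) / lam := by
      funext k; rw [sizeBias, hlam]
    rw [this]
    exact h1.div_const lam
  -- size bias of convPow f (m+1)
  have hSb := sizeBias_convPow f lam hf hmean hlam hpos m
  have hsb_nonneg : ∀ i, 0 ≤ sizeBias (convPow f (m + 1)) i := by
    rw [hSb]
    exact conv_nonneg'_s14 (convPow_nonneg hf0 m) hSfnn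
  have hsb_summ : Summable (sizeBias (convPow f (m + 1))) := by
    rw [hSb]
    exact summable_conv_s14 (convPow_summable hfs m) hSfs
  have hstep := sizeBias_convPow_succ f lam hf hmean hlam hpos m
  have hpowdef : convPow f (m + 1 + 1) = conv (convPow f (m + 1)) f := rfl
  constructor
  · rw [show m + 1 + 1 = m + 2 from rfl] at hpowdef ⊢
    rw [hstep, hpowdef]
    exact KL_conv_le _ _ f hsb_nonneg (convPow_nonneg hf0 (m + 1)) hf0 hsb_summ
      (convPow_summable hfs (m + 1)) hf.2
  · rw [show m + 1 + 1 = m + 2 from rfl] at hpowdef ⊢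
    rw [hstep, hpowdef]
    exact KL_conv_le _ _ f (convPow_nonneg hf0 (m + 1)) hsb_nonneg hf0
      (convPow_summable hfs (m + 1)) hsb_summ hf.2
end
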